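/- arXiv:2306.12690 — 6 statements merged into one kernel-verified Lean document; each statement's English description precedes it below -/
import Mathlib

section
/- (Clustering with denoised data: loss consistency.) Let X, X̂ ∈ ℝ^{n×d} with ‖X_i‖ ≤ 1 for all i ∈ [n] and max_i ‖X̂_i − X_i‖ ≤ ε ≤ 1. Let C = (C_1,…,C_K) be a partition of [n] with centers m_1,…,m_K ∈ ℝ^d satisfying ‖X_i − m_k‖ ≤ δ ≤ 1 for all i ∈ C_k. Define the k-means losses f(C′, m′) = (1/n)∑_{k∈[K]}∑_{i∈C′_k} ‖X_i − m′_k‖² and f̂(C′, m′) = (1/n)∑_{k∈[K]}∑_{i∈C′_k} ‖X̂_i − m′_k‖². Let (Ĉ, m̂) be a global minimizer of f̂ over all K-partitions of [n] and all centers in ℝ^d. Then f(Ĉ, m̂) ≤ f(C, m) + ε(4 + 2δ + 4ε). -/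
lemma part_sum_eq {n K : ℕ} (C : Fin K → Finset (Fin n)) (h : ∀ i, ∃! k, i ∈ C k)
    (g : Fin n → ℝ) : ∑ k, ∑ i ∈ C k, g i = ∑ i, g i := by
  have h1 : ∀ k, ∑ i ∈ C k, g i = ∑ i : Fin n, if i ∈ C k then g i else 0 := by
    intro k; rw [Finset.sum_ite_mem]; simp
  simp_rw [h1]
  rw [Finset.sum_comm]
  refine Finset.sum_congr rfl fun i _ => ?_
  obtain ⟨k, hk, huniq⟩ := h i
  rw [Finset.sum_eq_single k]
  · simp [hk]
  · intro b _ hb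
    have : i ∉ C b := fun hib => hb (huniq b hib)
    simp [this]
  · simp

/-- Proposition (clustering with denoised data: loss consistency).  If `‖X_i‖ ≤ 1`,
`max_i ‖X̂_i − X_i‖ ≤ ε ≤ 1`, `C` is a `K`-partition of `[n]` with centers `m` such that
`‖X_i − m_k‖ ≤ δ ≤ 1` for `i ∈ C_k`, and `(Ĉ, m̂)` globally minimizes the `k`-means loss
`f̂` built from the denoised data, then `f(Ĉ, m̂) ≤ f(C, m) + ε(4 + 2δ + 4ε)`. -/
theorem kmeans_denoised_loss_consistency (n d K : ℕ) (ε δ : ℝ)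
    (hε0 : 0 ≤ ε) (hε1 : ε ≤ 1) (hδ0 : 0 ≤ δ) (hδ1 : δ ≤ 1)
    (X Xh : Fin n → EuclideanSpace ℝ (Fin d))
    (hX : ∀ i, ‖X i‖ ≤ 1) (hXh : ∀ i, ‖Xh i - X i‖ ≤ ε)
    (C : Fin K → Finset (Fin n)) (m : Fin K → EuclideanSpace ℝ (Fin d))
    (hpart : ∀ i : Fin n, ∃! k, i ∈ C k)
    (hclose : ∀ k, ∀ i ∈ C k, ‖X i - m k‖ ≤ δ)
    (Ch : Fin K → Finset (Fin n)) (mh : Fin K → EuclideanSpace ℝ (Fin d))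
    (hChpart : ∀ i : Fin n, ∃! k, i ∈ Ch k)
    (hmin : ∀ (C' : Fin K → Finset (Fin n)) (m' : Fin K → EuclideanSpace ℝ (Fin d)),
      (∀ i : Fin n, ∃! k, i ∈ C' k) →
      (1 / n : ℝ) * ∑ k, ∑ i ∈ Ch k, ‖Xh i - mh k‖ ^ 2 ≤
        (1 / n : ℝ) * ∑ k, ∑ i ∈ C' k, ‖Xh i - m' k‖ ^ 2) :
    (1 / n : ℝ) * ∑ k, ∑ i ∈ Ch k, ‖X i - mh k‖ ^ 2 ≤
      (1 / n : ℝ) * ∑ k, ∑ i ∈ C k, ‖X i - m k‖ ^ 2 + ε * (4 + 2 * δ + 4 * ε) := by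
  rcases Nat.eq_zero_or_pos n with hn | hn
  · subst hn
    have hA : ∀ k : Fin K, (Ch k) = ∅ := fun k => Finset.eq_empty_of_forall_notMem (fun i _ => i.elim0)
    have hB : ∀ k : Fin K, (C k) = ∅ := fun k => Finset.eq_empty_of_forall_notMem (fun i _ => i.elim0)
    simp [hA, hB]
    positivity
  have hn' : (0:ℝ) < n := by exact_mod_cast hn
  set A := ∑ k, ∑ i ∈ Ch k, ‖X i - mh k‖ ^ 2 with hAdef
  set B := ∑ k, ∑ i ∈ Ch k, ‖Xh i - mh k‖ ^ 2 with hBdef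
  set S := ∑ k, ∑ i ∈ C k, ‖X i - m k‖ ^ 2 with hSdef
  set T := ∑ k, ∑ i ∈ C k, ‖Xh i - m k‖ ^ 2 with hTdef
  -- B ≤ T from minimality
  have hBT : B ≤ T := by
    have := hmin C m hpart
    have h2 := mul_le_mul_of_nonneg_left this (le_of_lt hn')
    rw [← mul_assoc, ← mul_assoc, mul_one_div, div_self (ne_of_gt hn'), one_mul, one_mul] at h2
    exact h2
  -- termwise: for i ∈ C k, ‖Xh i - m k‖^2 ≤ ‖X i - m k‖^2 + 2*ε*δ + ε^2
  have hT_S : T ≤ S + n * (2*ε*δ + ε^2) := by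
    have h1 : T ≤ ∑ k, ∑ i ∈ C k, (‖X i - m k‖^2 + (2*ε*δ + ε^2)) := by
      refine Finset.sum_le_sum fun k _ => Finset.sum_le_sum fun i hi => ?_
      have ht : ‖Xh i - m k‖ ≤ ‖X i - m k‖ + ε := by
        calc ‖Xh i - m k‖ = ‖(X i - m k) + (Xh i - X i)‖ := by congr 1; abel
          _ ≤ ‖X i - m k‖ + ‖Xh i - X i‖ := norm_add_le _ _
          _ ≤ ‖X i - m k‖ + ε := by linarith [hXh i]
      have h0 : (0:ℝ) ≤ ‖Xh i - m k‖ := norm_nonneg _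
      have hd := hclose k i hi
      nlinarith [norm_nonneg (X i - m k)]
    have h2 : ∑ k, ∑ i ∈ C k, (‖X i - m k‖^2 + (2*ε*δ + ε^2))
        = S + ∑ k, ∑ i ∈ C k, (2*ε*δ + ε^2) := by
      simp [Finset.sum_add_distrib, hSdef]
    have h3 : ∑ k, ∑ i ∈ C k, (2*ε*δ + ε^2 : ℝ) = n * (2*ε*δ + ε^2) := by
      rw [part_sum_eq C hpart]
      simp [Finset.card_univ, mul_comm]
      ring
    rw [h2, h3] at h1; exact h1
  -- T ≤ n * (δ+ε)^2
  have hT2 : T ≤ n * (δ + ε)^2 := by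
    have h1 : T ≤ ∑ k, ∑ i ∈ C k, ((δ + ε)^2 : ℝ) := by
      refine Finset.sum_le_sum fun k _ => Finset.sum_le_sum fun i hi => ?_
      have ht : ‖Xh i - m k‖ ≤ δ + ε := by
        calc ‖Xh i - m k‖ = ‖(X i - m k) + (Xh i - X i)‖ := by congr 1; abel
          _ ≤ ‖X i - m k‖ + ‖Xh i - X i‖ := norm_add_le _ _
          _ ≤ δ + ε := by linarith [hXh i, hclose k i hi]
      nlinarith [norm_nonneg (Xh i - m k)]
    have h3 : ∑ k, ∑ i ∈ C k, ((δ + ε)^2 : ℝ) = n * (δ + ε)^2 := by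
      rw [part_sum_eq C hpart]
      simp [Finset.card_univ, mul_comm]
    linarith
  -- A ≤ (1+ε) * B + n * (ε + ε^2)
  have hAB : A ≤ (1 + ε) * B + n * (ε + ε^2) := by
    have h1 : A ≤ ∑ k, ∑ i ∈ Ch k, ((1+ε) * ‖Xh i - mh k‖^2 + (ε + ε^2)) := by
      refine Finset.sum_le_sum fun k _ => Finset.sum_le_sum fun i hi => ?_
      have ht : ‖X i - mh k‖ ≤ ‖Xh i - mh k‖ + ε := by
        calc ‖X i - mh k‖ = ‖(Xh i - mh k) - (Xh i - X i)‖ := by congr 1; abel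
          _ ≤ ‖Xh i - mh k‖ + ‖Xh i - X i‖ := norm_sub_le _ _
          _ ≤ ‖Xh i - mh k‖ + ε := by linarith [hXh i]
      have h0 : (0:ℝ) ≤ ‖Xh i - mh k‖ := norm_nonneg _
      -- ‖X-mh‖^2 ≤ (a+ε)^2 = a^2 + 2εa + ε^2 ≤ a^2 + ε(1+a^2) + ε^2
      nlinarith [norm_nonneg (X i - mh k), sq_nonneg (‖Xh i - mh k‖ - 1)]
    have h2 : ∑ k, ∑ i ∈ Ch k, ((1+ε) * ‖Xh i - mh k‖^2 + (ε + ε^2))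
        = (1+ε) * B + ∑ k, ∑ i ∈ Ch k, (ε + ε^2) := by
      simp [Finset.sum_add_distrib, Finset.mul_sum, hBdef]
    have h3 : ∑ k, ∑ i ∈ Ch k, (ε + ε^2 : ℝ) = n * (ε + ε^2) := by
      rw [part_sum_eq Ch hChpart]
      simp [Finset.card_univ, mul_comm]
      ring
    rw [h2, h3] at h1; exact h1
  -- combine: A ≤ S + n * ε * (4 + 2δ + 4ε)
  have hfinal : A ≤ S + n * (ε * (4 + 2*δ + 4*ε)) := by
    have hεB : ε * B ≤ ε * (n * (δ + ε)^2) :=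
      mul_le_mul_of_nonneg_left (le_trans hBT hT2) hε0
    have hkey : ε * (n * (δ + ε)^2) + n * (ε + ε^2) + n * (2*ε*δ + ε^2)
        ≤ n * (ε * (4 + 2*δ + 4*ε)) := by
      have : (δ + ε)^2 ≤ 3 + 2*ε := by nlinarith
      have h4 : ε * (δ + ε)^2 + (ε + ε^2) + (2*ε*δ + ε^2) ≤ ε * (4 + 2*δ + 4*ε) := by
        nlinarith
      nlinarith
    nlinarith
  have := mul_le_mul_of_nonneg_left hfinal (by positivity : (0:ℝ) ≤ 1/n)
  calc (1/n : ℝ) * A ≤ (1/n) * (S + n * (ε * (4 + 2*δ + 4*ε))) := this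
    _ = (1/n) * S + ε * (4 + 2*δ + 4*ε) := by field_simp
end

section
/- (Clustering with denoised data: exact recovery.) Let X, X̂ ∈ ℝ^{n×d} with ‖X_i‖ ≤ 1 for all i ∈ [n] and max_i ‖X̂_i − X_i‖ ≤ ε. Let C = (C_1,…,C_K) be a partition of [n] with centers m_1,…,m_K ∈ ℝ^d such that: |C_k| ≥ c_0·n for all k; ‖X_i − m_k‖ ≤ δ for all i ∈ C_k; and ‖m_j − m_k‖ ≥ c_m for all j ≠ k. Define f̂(C′, m′) = (1/n)∑_{k∈[K]}∑_{i∈C′_k} ‖X̂_i − m′_k‖², and let (Ĉ, m̂) be a global minimizer of f̂ over all K-partitions of [n] and all centers in ℝ^d. If c_m > 2(δ + ε + 2√(2(δ² + ε²)/c_0)), then the partition Ĉ coincides with C up to a permutation of the cluster labels. -/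
open Finset

/-- Summing over the fibers of an assignment map equals summing over all points. -/
lemma kmeans_fiber_sum {n K : ℕ} (σ : Fin n → Fin K) (C' : Fin K → Finset (Fin n))
    (h : ∀ k, C' k = Finset.univ.filter (fun i => σ i = k)) (f : Fin n → Fin K → ℝ) :
    ∑ k, ∑ i ∈ C' k, f i k = ∑ i, f i (σ i) := by
  calc ∑ k, ∑ i ∈ C' k, f i k
      = ∑ k, ∑ i ∈ Finset.univ.filter (fun i => σ i = k), f i (σ i) := by
        refine Finset.sum_congr rfl fun k _ => ?_
        rw [h k]
        exact Finset.sum_congr rfl fun i hi => by rw [(Finset.mem_filter.1 hi).2]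
    _ = _ := Finset.sum_fiberwise _ _ _

set_option maxHeartbeats 1000000 in
/-- Proposition (clustering with denoised data: exact recovery).  Under the cluster-size,
within-cluster radius and center-separation assumptions, if
`c_m > 2(δ + ε + 2√(2(δ² + ε²)/c₀))` then any global minimizer `(Ĉ, m̂)` of the `k`-means
loss built from the denoised data recovers the true partition up to a permutation of the
cluster labels. -/
theorem kmeans_denoised_exact_recovery (n d K : ℕ) (ε δ c₀ cm : ℝ)
    (hε0 : 0 ≤ ε) (hδ0 : 0 < δ) (hc₀ : 0 < c₀) (hcm : 0 < cm)
    (X Xh : Fin n → EuclideanSpace ℝ (Fin d))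
    (hX : ∀ i, ‖X i‖ ≤ 1) (hXh : ∀ i, ‖Xh i - X i‖ ≤ ε)
    (C : Fin K → Finset (Fin n)) (m : Fin K → EuclideanSpace ℝ (Fin d))
    (hpart : ∀ i : Fin n, ∃! k, i ∈ C k)
    (hsize : ∀ k, c₀ * n ≤ ((C k).card : ℝ))
    (hclose : ∀ k, ∀ i ∈ C k, ‖X i - m k‖ ≤ δ)
    (hsep : ∀ j k : Fin K, j ≠ k → cm ≤ ‖m j - m k‖)
    (Ch : Fin K → Finset (Fin n)) (mh : Fin K → EuclideanSpace ℝ (Fin d))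
    (hChpart : ∀ i : Fin n, ∃! k, i ∈ Ch k)
    (hmin : ∀ (C' : Fin K → Finset (Fin n)) (m' : Fin K → EuclideanSpace ℝ (Fin d)),
      (∀ i : Fin n, ∃! k, i ∈ C' k) →
      (1 / n : ℝ) * ∑ k, ∑ i ∈ Ch k, ‖Xh i - mh k‖ ^ 2 ≤
        (1 / n : ℝ) * ∑ k, ∑ i ∈ C' k, ‖Xh i - m' k‖ ^ 2)
    (hgap : 2 * (δ + ε + 2 * Real.sqrt (2 * (δ ^ 2 + ε ^ 2) / c₀)) < cm) :
    ∃ π : Equiv.Perm (Fin K), ∀ k, Ch (π k) = C k := by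
  classical
  -- triangle inequality and symmetry helpers
  have tri : ∀ a b c : EuclideanSpace ℝ (Fin d), ‖a - c‖ ≤ ‖a - b‖ + ‖b - c‖ := fun a b c => by
    simpa [dist_eq_norm] using dist_triangle a b c
  have nsymm : ∀ a b : EuclideanSpace ℝ (Fin d), ‖a - b‖ = ‖b - a‖ := fun a b =>
    norm_sub_rev a b
  rcases Nat.eq_zero_or_pos n with hn0 | hn0
  · subst hn0
    have hemp : ∀ s : Finset (Fin 0), s = ∅ := fun s =>
      Finset.eq_empty_of_forall_notMem (fun i => i.elim0)
    exact ⟨1, fun k => by rw [hemp (Ch _), hemp (C k)]⟩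
  have hn' : (0 : ℝ) < n := by exact_mod_cast hn0
  obtain ⟨k0, hk0, -⟩ := hpart ⟨0, hn0⟩
  have hpart' := hpart
  -- assignment maps
  choose σ hσmem hσuniq using hChpart
  choose τ hτmem hτuniq using hpart
  have hChfib : ∀ k, Ch k = Finset.univ.filter fun i => σ i = k := by
    intro k; ext i
    simp only [Finset.mem_filter, Finset.mem_univ, true_and]
    exact ⟨fun h => (hσuniq i k h).symm, fun h => h ▸ hσmem i⟩
  have hCfib : ∀ k, C k = Finset.univ.filter fun i => τ i = k := by
    intro k; ext i
    simp only [Finset.mem_filter, Finset.mem_univ, true_and]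
    exact ⟨fun h => (hτuniq i k h).symm, fun h => h ▸ hτmem i⟩
  set L : ℝ := 2 * (δ ^ 2 + ε ^ 2) with hL
  have hLpos : 0 < L := by positivity
  set R : ℝ := Real.sqrt (L / c₀) with hR
  have hgap' : 2 * (δ + ε + 2 * R) < cm := hgap
  have hRpos : 0 < R := Real.sqrt_pos.mpr (by positivity)
  have hR2 : R ^ 2 = L / c₀ := Real.sq_sqrt (by positivity)
  have hc₀1 : c₀ ≤ 1 := by
    have h2 : ((C k0).card : ℝ) ≤ n := by
      have := Finset.card_le_univ (C k0)
      simp only [Finset.card_univ, Fintype.card_fin] at this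
      exact_mod_cast this
    nlinarith [hsize k0]
  have hRge : δ + ε ≤ R := by
    have h1 : (δ + ε) ^ 2 ≤ L := by nlinarith [sq_nonneg (δ - ε)]
    have h2 : L ≤ L / c₀ := by rw [le_div_iff₀ hc₀]; nlinarith
    calc δ + ε = Real.sqrt ((δ + ε) ^ 2) := (Real.sqrt_sq (by positivity)).symm
      _ ≤ R := Real.sqrt_le_sqrt (by linarith)
  -- the loss of the minimizer
  set S : ℝ := ∑ i, ‖Xh i - mh (σ i)‖ ^ 2 with hS
  have hSrw : ∑ k, ∑ i ∈ Ch k, ‖Xh i - mh k‖ ^ 2 = S :=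
    kmeans_fiber_sum σ Ch hChfib (fun i k => ‖Xh i - mh k‖ ^ 2)
  have hTrw : ∑ k, ∑ i ∈ C k, ‖Xh i - m k‖ ^ 2 = ∑ i, ‖Xh i - m (τ i)‖ ^ 2 :=
    kmeans_fiber_sum τ C hCfib (fun i k => ‖Xh i - m k‖ ^ 2)
  have hpt : ∀ i, ‖Xh i - m (τ i)‖ ≤ δ + ε := by
    intro i
    have := tri (Xh i) (X i) (m (τ i))
    have h2 := hclose (τ i) i (hτmem i)
    linarith [hXh i]
  have hSle : S ≤ n * L := by
    have h0 := hmin C m hpart'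
    rw [hSrw, hTrw] at h0
    have h1 : S ≤ ∑ i, ‖Xh i - m (τ i)‖ ^ 2 :=
      (mul_le_mul_iff_right₀ (by positivity : (0:ℝ) < 1 / n)).mp h0
    have h2 : ∑ i, ‖Xh i - m (τ i)‖ ^ 2 ≤ ∑ _i : Fin n, L :=
      Finset.sum_le_sum fun i _ => by
        nlinarith [hpt i, norm_nonneg (Xh i - m (τ i)), sq_nonneg (δ - ε)]
    rw [Finset.sum_const, Finset.card_univ, Fintype.card_fin, nsmul_eq_mul] at h2
    linarith
  -- every true cluster contains a point assigned well by the minimizer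
  have hgood : ∀ k, ∃ i, τ i = k ∧ ‖Xh i - mh (σ i)‖ ≤ R := by
    intro k
    by_contra hbad
    push_neg at hbad
    have hCne : (C k).Nonempty := by
      rw [← Finset.card_pos]
      have : (0 : ℝ) < (C k).card := lt_of_lt_of_le (by positivity) (hsize k)
      exact_mod_cast this
    have hmemτ : ∀ i ∈ C k, τ i = k := fun i hi => (hτuniq i k hi).symm
    have hlt : ((C k).card : ℝ) * R ^ 2 < ∑ i ∈ C k, ‖Xh i - mh (σ i)‖ ^ 2 := by
      have h := Finset.sum_lt_sum_of_nonempty hCne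
        (f := fun _ => R ^ 2) (g := fun i => ‖Xh i - mh (σ i)‖ ^ 2)
        (fun i hi => by
          have hx := hbad i (hmemτ i hi)
          exact pow_lt_pow_left₀ hx hRpos.le two_ne_zero)
      simpa [Finset.sum_const, nsmul_eq_mul] using h
    have hle2 : ∑ i ∈ C k, ‖Xh i - mh (σ i)‖ ^ 2 ≤ S :=
      Finset.sum_le_sum_of_subset_of_nonneg (Finset.subset_univ _)
        (fun i _ _ => by positivity)
    have hcontra : n * L < n * L := by
      calc n * L = c₀ * n * (L / c₀) := by field_simp
        _ ≤ ((C k).card : ℝ) * R ^ 2 := by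
            rw [hR2]; exact mul_le_mul_of_nonneg_right (hsize k) (by positivity)
        _ < S := lt_of_lt_of_le hlt hle2
        _ ≤ n * L := hSle
    exact lt_irrefl _ hcontra
  choose ip hip1 hip2 using hgood
  set π0 : Fin K → Fin K := fun k => σ (ip k) with hπ0
  have hipC : ∀ k, ip k ∈ C k := fun k => by
    have := hτmem (ip k); rwa [hip1 k] at this
  have hmclose : ∀ k, ‖m k - mh (π0 k)‖ ≤ δ + ε + R := by
    intro k
    have t1 := tri (m k) (Xh (ip k)) (mh (π0 k))
    have t2 := tri (m k) (X (ip k)) (Xh (ip k))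
    have h1 : ‖X (ip k) - m k‖ ≤ δ := hclose k (ip k) (hipC k)
    have h2 := hXh (ip k)
    have h3 := hip2 k
    rw [nsymm (m k) (X (ip k))] at t2
    rw [nsymm (X (ip k)) (Xh (ip k))] at t2
    linarith
  have hinj : Function.Injective π0 := by
    intro k k' hkk
    by_contra hne
    have hs := hsep k k' hne
    have b1 := hmclose k
    have b2 := hmclose k'
    have t : ‖m k - m k'‖ ≤ ‖m k - mh (π0 k')‖ + ‖mh (π0 k') - m k'‖ :=
      tri _ _ _
    rw [← hkk, nsymm (mh (π0 k)) (m k')] at t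
    rw [← hkk] at b2
    linarith
  -- every point is assigned to the image of its true cluster
  have hmain : ∀ i, σ i = π0 (τ i) := by
    intro i
    by_contra hne
    obtain ⟨k'', hk''⟩ := (Finite.injective_iff_surjective.mp hinj) (σ i)
    have hkne : k'' ≠ τ i := fun h => hne (by rw [← hk'', h])
    have hXm : ‖Xh i - m (τ i)‖ ≤ δ + ε := hpt i
    have hA : ‖Xh i - mh (π0 (τ i))‖ ≤ 2 * (δ + ε) + R := by
      have t1 := tri (Xh i) (m (τ i)) (mh (π0 (τ i)))
      have t2 := hmclose (τ i)
      linarith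
    have hB : cm - (δ + ε + R) - (δ + ε) ≤ ‖Xh i - mh (σ i)‖ := by
      have t1 := tri (m k'') (mh (σ i)) (m (τ i))
      have t2 := tri (mh (σ i)) (Xh i) (m (τ i))
      have t3 := hsep k'' (τ i) hkne
      have t4 : ‖m k'' - mh (σ i)‖ ≤ δ + ε + R := by rw [← hk'']; exact hmclose k''
      rw [nsymm (mh (σ i)) (Xh i)] at t2
      linarith
    have hAB : ‖Xh i - mh (π0 (τ i))‖ ^ 2 < ‖Xh i - mh (σ i)‖ ^ 2 := by
      have h1 : ‖Xh i - mh (π0 (τ i))‖ < ‖Xh i - mh (σ i)‖ := by linarith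
      nlinarith [norm_nonneg (Xh i - mh (π0 (τ i)))]
    -- build an improved partition
    set σ' : Fin n → Fin K := fun i' => if i' = i then π0 (τ i) else σ i' with hσ'
    set C' : Fin K → Finset (Fin n) := fun l => Finset.univ.filter fun i' => σ' i' = l with hC'
    have hC'part : ∀ i', ∃! l, i' ∈ C' l := by
      intro i'
      refine ⟨σ' i', by simp [hC'], fun l hl => ?_⟩
      simp only [hC', Finset.mem_filter, Finset.mem_univ, true_and] at hl
      exact hl.symm
    have hC'rw : ∑ l, ∑ i' ∈ C' l, ‖Xh i' - mh l‖ ^ 2 = ∑ i', ‖Xh i' - mh (σ' i')‖ ^ 2 :=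
      kmeans_fiber_sum σ' C' (fun _ => rfl) (fun i' l => ‖Xh i' - mh l‖ ^ 2)
    have hlt : ∑ i', ‖Xh i' - mh (σ' i')‖ ^ 2 < S := by
      rw [hS]
      rw [← Finset.sum_erase_add _ _ (Finset.mem_univ i),
        ← Finset.sum_erase_add _ (fun i' => ‖Xh i' - mh (σ i')‖ ^ 2) (Finset.mem_univ i)]
      have heq : ∑ i' ∈ Finset.univ.erase i, ‖Xh i' - mh (σ' i')‖ ^ 2 =
          ∑ i' ∈ Finset.univ.erase i, ‖Xh i' - mh (σ i')‖ ^ 2 :=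
        Finset.sum_congr rfl fun i' hi' => by
          rw [hσ']; simp [(Finset.mem_erase.1 hi').1]
      rw [heq]
      have hσ'i : σ' i = π0 (τ i) := by rw [hσ']; simp
      rw [hσ'i]
      linarith
    have h0 := hmin C' mh hC'part
    rw [hSrw, hC'rw] at h0
    have := (mul_le_mul_iff_right₀ (by positivity : (0:ℝ) < 1 / n)).mp h0
    linarith
  -- conclude
  refine ⟨Equiv.ofBijective π0 (Finite.injective_iff_bijective.mp hinj), fun k => ?_⟩
  have hπeq : (Equiv.ofBijective π0 (Finite.injective_iff_bijective.mp hinj)) k = π0 k := rfl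
  rw [hπeq, hChfib, hCfib]
  ext i
  simp only [Finset.mem_filter, Finset.mem_univ, true_and]
  constructor
  · intro h
    exact hinj ((hmain i).symm.trans h)
  · intro h
    rw [hmain i, h]
end

section
/- (Graphical Laplacian stability.) Let k : ℝ^d × ℝ^d → ℝ be symmetric and L₀-Lipschitz in each argument, and satisfy 1/K ≤ k(x,y) ≤ K whenever ‖x‖, ‖y‖ ≤ 2, for constants K ≥ 1, L₀ > 0. Let X_1,…,X_n ∈ ℝ^d with ‖X_i‖ ≤ 1 and X̂_1,…,X̂_n ∈ ℝ^d with ‖X̂_i − X_i‖ ≤ ε ≤ 1 for all i. Define A_{ij} = k(X_i, X_j), the diagonal matrix D with D_{ii} = ∑_{j∈[n]} A_{ij}, and the normalized Laplacian L = I − D^{−1/2} A D^{−1/2}; define Â, D̂, L̂ analogously from X̂_1,…,X̂_n. Then there is a constant C depending only on K and L₀ (not on n, d) such that max_{i∈[n]} ∑_{j∈[n]} |L̂_{ij} − L_{ij}| ≤ C·ε, i.e. ‖L̂ − L‖_∞ ≤ Cε; moreover ‖L̂‖_∞ = max_i ∑_j |L̂_{ij}| ≤ 1 + K². -/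
/-- The normalized graph Laplacian `L = I − D^{−1/2} A D^{−1/2}` built from data points
`X_1, …, X_n` and a kernel `k`, where `A_{ij} = k(X_i, X_j)` and `D_{ii} = ∑_j A_{ij}`. -/
noncomputable def lapMat {n d : ℕ} (k : EuclideanSpace ℝ (Fin d) → EuclideanSpace ℝ (Fin d) → ℝ)
    (X : Fin n → EuclideanSpace ℝ (Fin d)) : Matrix (Fin n) (Fin n) ℝ :=
  fun i j => (if i = j then (1 : ℝ) else 0) -
    k (X i) (X j) /
      (Real.sqrt (∑ l, k (X i) (X l)) * Real.sqrt (∑ l, k (X j) (X l)))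


lemma sqrt_diff_bound {x y m B : ℝ} (hm : 0 < m) (hx : m * m ≤ x) (hy : m * m ≤ y)
    (hxy : |x - y| ≤ B) : |Real.sqrt x - Real.sqrt y| ≤ B / (2 * m) := by
  have hx0 : 0 ≤ x := le_trans (by positivity) hx
  have hy0 : 0 ≤ y := le_trans (by positivity) hy
  have hpx : m ≤ Real.sqrt x := by
    calc m = Real.sqrt (m * m) := (Real.sqrt_mul_self hm.le).symm
    _ ≤ Real.sqrt x := Real.sqrt_le_sqrt hx
  have hpy : m ≤ Real.sqrt y := by
    calc m = Real.sqrt (m * m) := (Real.sqrt_mul_self hm.le).symm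
    _ ≤ Real.sqrt y := Real.sqrt_le_sqrt hy
  have hpos : 0 < Real.sqrt x + Real.sqrt y := by linarith
  have key : |Real.sqrt x - Real.sqrt y| * (Real.sqrt x + Real.sqrt y) = |x - y| := by
    rw [← abs_of_pos hpos, ← abs_mul]
    congr 1
    have hx' := Real.mul_self_sqrt hx0
    have hy' := Real.mul_self_sqrt hy0
    linear_combination hx' - hy'
  have h1 : |Real.sqrt x - Real.sqrt y| = |x - y| / (Real.sqrt x + Real.sqrt y) := by
    rw [eq_div_iff (ne_of_gt hpos)]; exact key
  rw [h1]
  exact div_le_div₀ (le_trans (abs_nonneg _) hxy) hxy (by linarith) (by linarith)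

lemma core_est (K L₀ ε n m a b p q r s : ℝ)
    (hK : 1 ≤ K) (hL₀ : 0 < L₀) (hε : 0 ≤ ε) (hn : 0 < n)
    (hm : 0 < m) (hmn : K * (m * m) = n)
    (ha0 : 0 ≤ a) (ha' : a ≤ K)
    (hab : |a - b| ≤ 2 * L₀ * ε)
    (hp : m ≤ p) (hp' : p ≤ K * m)
    (hq : m ≤ q) (hq' : q ≤ K * m)
    (hr : m ≤ r) (hr' : r ≤ K * m)
    (hs : m ≤ s) (hs' : s ≤ K * m)
    (hpr : |p - r| ≤ n * L₀ * ε / m)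
    (hqs : |q - s| ≤ n * L₀ * ε / m) :
    |b / (r * s) - a / (p * q)| ≤ 4 * K ^ 4 * L₀ * ε / n := by
  have hK0 : (0:ℝ) < K := lt_of_lt_of_le one_pos hK
  have hp0 : 0 < p := lt_of_lt_of_le hm hp
  have hq0 : 0 < q := lt_of_lt_of_le hm hq
  have hr0 : 0 < r := lt_of_lt_of_le hm hr
  have hs0 : 0 < s := lt_of_lt_of_le hm hs
  have hδ : n * L₀ * ε / m * m = n * L₀ * ε := by field_simp
  -- numerator bound
  have hnum : |b * (p * q) - r * s * a| ≤ 4 * n * K ^ 2 * L₀ * ε := by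
    have e1 : b * (p * q) - r * s * a = (b - a) * (p * q) + a * ((p - r) * q) + a * (r * (q - s)) := by
      ring
    have t1 : |(b - a) * (p * q)| ≤ 2 * L₀ * ε * (K * m * (K * m)) := by
      rw [abs_mul, abs_of_pos (mul_pos hp0 hq0)]
      have hba : |b - a| ≤ 2 * L₀ * ε := by rw [abs_sub_comm]; exact hab
      exact mul_le_mul hba (mul_le_mul hp' hq' hq0.le (by positivity)) (by positivity) (by positivity)
    have t2 : |a * ((p - r) * q)| ≤ K * (n * L₀ * ε / m * (K * m)) := by
      rw [abs_mul, abs_mul, abs_of_pos hq0, abs_of_nonneg ha0]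
      exact mul_le_mul ha' (mul_le_mul hpr hq' hq0.le (by positivity)) (by positivity) hK0.le
    have t3 : |a * (r * (q - s))| ≤ K * (K * m * (n * L₀ * ε / m)) := by
      rw [abs_mul, abs_mul, abs_of_pos hr0, abs_of_nonneg ha0]
      exact mul_le_mul ha' (mul_le_mul hr' hqs (abs_nonneg _) (by positivity)) (by positivity) hK0.le
    have tri : |b * (p * q) - r * s * a| ≤ |(b - a) * (p * q)| + |a * ((p - r) * q)| + |a * (r * (q - s))| := by
      rw [e1]
      exact le_trans (abs_add_le _ _) (add_le_add (abs_add_le _ _) le_rfl)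
    have hKm2 : K * m * (K * m) = K * n := by linear_combination K * hmn
    have hmul1 : n * L₀ * ε / m * (K * m) = K * (n * L₀ * ε) := by field_simp
    have hmul2 : K * m * (n * L₀ * ε / m) = K * (n * L₀ * ε) := by field_simp
    calc |b * (p * q) - r * s * a| ≤ |(b - a) * (p * q)| + |a * ((p - r) * q)| + |a * (r * (q - s))| := tri
      _ ≤ 2 * L₀ * ε * (K * m * (K * m)) + K * (n * L₀ * ε / m * (K * m)) + K * (K * m * (n * L₀ * ε / m)) :=
          add_le_add (add_le_add t1 t2) t3
      _ = 2 * L₀ * ε * (K * n) + K * (K * (n * L₀ * ε)) + K * (K * (n * L₀ * ε)) := by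
          rw [hKm2, hmul1, hmul2]
      _ ≤ 4 * n * K ^ 2 * L₀ * ε := by
          nlinarith [mul_nonneg (mul_nonneg (mul_nonneg (mul_nonneg hn.le hL₀.le) hε) hK0.le)
            (sub_nonneg.mpr hK)]
  -- denominator bound
  have hm2 : m * m = n / K := by field_simp at hmn ⊢; linarith
  have hrs : n / K ≤ r * s := hm2 ▸ mul_le_mul hr hs hm.le hr0.le
  have hpq : n / K ≤ p * q := hm2 ▸ mul_le_mul hp hq hm.le hp0.le
  have hdenom : (n / K) ^ 2 ≤ r * s * (p * q) := by
    rw [sq]; exact mul_le_mul hrs hpq (by positivity) (by positivity)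
  have hdpos : 0 < r * s * (p * q) := by positivity
  have heq : |b / (r * s) - a / (p * q)| = |b * (p * q) - r * s * a| / (r * s * (p * q)) := by
    rw [div_sub_div _ _ (ne_of_gt (mul_pos hr0 hs0)) (ne_of_gt (mul_pos hp0 hq0)), abs_div,
      abs_of_pos hdpos]
  rw [heq]
  have hnk : (0:ℝ) < (n / K) ^ 2 := by positivity
  calc |b * (p * q) - r * s * a| / (r * s * (p * q))
      ≤ (4 * n * K ^ 2 * L₀ * ε) / ((n / K) ^ 2) :=
        div_le_div₀ (by positivity) hnum hnk hdenom
    _ = 4 * K ^ 4 * L₀ * ε / n := by field_simp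

/-- Proposition (graphical Laplacian stability).  For a symmetric kernel `k`,
`L₀`-Lipschitz in each argument with `1/K ≤ k ≤ K` on the ball of radius 2, data with
`‖X_i‖ ≤ 1` and denoised data with `‖X̂_i − X_i‖ ≤ ε ≤ 1`, there is a constant `C`
depending only on `K, L₀` so that `‖L̂ − L‖_∞ ≤ Cε`; moreover `‖L̂‖_∞ ≤ 1 + K²`. -/
theorem laplacian_stability (K L₀ : ℝ) (hK : 1 ≤ K) (hL₀ : 0 < L₀) :
    ∃ C : ℝ, 0 < C ∧
      ∀ (n d : ℕ) (k : EuclideanSpace ℝ (Fin d) → EuclideanSpace ℝ (Fin d) → ℝ)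
        (X Xh : Fin n → EuclideanSpace ℝ (Fin d)) (ε : ℝ),
        (∀ x y, k x y = k y x) →
        (∀ x x' y, |k x y - k x' y| ≤ L₀ * ‖x - x'‖) →
        (∀ x y y', |k x y - k x y'| ≤ L₀ * ‖y - y'‖) →
        (∀ x y, ‖x‖ ≤ 2 → ‖y‖ ≤ 2 → 1 / K ≤ k x y ∧ k x y ≤ K) →
        (∀ i, ‖X i‖ ≤ 1) →
        0 ≤ ε → ε ≤ 1 →
        (∀ i, ‖Xh i - X i‖ ≤ ε) →
        (∀ i : Fin n, ∑ j : Fin n, |lapMat k Xh i j - lapMat k X i j| ≤ C * ε) ∧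
        (∀ i : Fin n, ∑ j : Fin n, |lapMat k Xh i j| ≤ 1 + K ^ 2) := by
  have hK0 : (0:ℝ) < K := lt_of_lt_of_le one_pos hK
  refine ⟨4 * K ^ 4 * L₀, by positivity, ?_⟩
  intro n d k X Xh ε hsymm hlipx hlipy hball hX hε0 hε1 hXh
  have hXh2 : ∀ i, ‖Xh i‖ ≤ 2 := by
    intro i
    have h1 := norm_sub_norm_le (Xh i) (X i)
    have h2 := hXh i; have h3 := hX i; linarith
  have hX2 : ∀ i, ‖X i‖ ≤ 2 := fun i => le_trans (hX i) one_le_two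
  have hkX : ∀ i j, 1/K ≤ k (X i) (X j) ∧ k (X i) (X j) ≤ K :=
    fun i j => hball _ _ (hX2 i) (hX2 j)
  have hkXh : ∀ i j, 1/K ≤ k (Xh i) (Xh j) ∧ k (Xh i) (Xh j) ≤ K :=
    fun i j => hball _ _ (hXh2 i) (hXh2 j)
  have hKinv : (0:ℝ) < 1/K := by positivity
  -- kernel perturbation
  have hab : ∀ i j, |k (Xh i) (Xh j) - k (X i) (X j)| ≤ 2 * L₀ * ε := by
    intro i j
    calc |k (Xh i) (Xh j) - k (X i) (X j)|
        ≤ |k (Xh i) (Xh j) - k (X i) (Xh j)| + |k (X i) (Xh j) - k (X i) (X j)| :=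
          abs_sub_le _ _ _
      _ ≤ L₀ * ‖Xh i - X i‖ + L₀ * ‖Xh j - X j‖ := add_le_add (hlipx _ _ _) (hlipy _ _ _)
      _ ≤ L₀ * ε + L₀ * ε :=
          add_le_add (mul_le_mul_of_nonneg_left (hXh i) hL₀.le)
            (mul_le_mul_of_nonneg_left (hXh j) hL₀.le)
      _ = 2 * L₀ * ε := by ring
  -- sum bounds
  have hsum_lb : ∀ (Y : Fin n → EuclideanSpace ℝ (Fin d)),
      (∀ i, ‖Y i‖ ≤ 2) → ∀ i, (n:ℝ)/K ≤ ∑ l, k (Y i) (Y l) := by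
    intro Y hY i
    calc (n:ℝ)/K = ∑ _l : Fin n, 1/K := by
          rw [Finset.sum_const, Finset.card_univ, Fintype.card_fin, nsmul_eq_mul, mul_one_div]
      _ ≤ ∑ l, k (Y i) (Y l) :=
          Finset.sum_le_sum (fun l _ => (hball _ _ (hY i) (hY l)).1)
  have hsum_ub : ∀ (Y : Fin n → EuclideanSpace ℝ (Fin d)),
      (∀ i, ‖Y i‖ ≤ 2) → ∀ i, (∑ l, k (Y i) (Y l)) ≤ (n:ℝ) * K := by
    intro Y hY i
    calc (∑ l, k (Y i) (Y l)) ≤ ∑ _l : Fin n, K :=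
          Finset.sum_le_sum (fun l _ => (hball _ _ (hY i) (hY l)).2)
      _ = (n:ℝ) * K := by
          rw [Finset.sum_const, Finset.card_univ, Fintype.card_fin, nsmul_eq_mul]
  have hsum_diff : ∀ i, |(∑ l, k (Xh i) (Xh l)) - ∑ l, k (X i) (X l)| ≤ 2 * (n:ℝ) * L₀ * ε := by
    intro i
    have h1 : (∑ l, k (Xh i) (Xh l)) - ∑ l, k (X i) (X l)
        = ∑ l, (k (Xh i) (Xh l) - k (X i) (X l)) := (Finset.sum_sub_distrib _ _).symm
    rw [h1]
    calc |∑ l, (k (Xh i) (Xh l) - k (X i) (X l))|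
        ≤ ∑ l, |k (Xh i) (Xh l) - k (X i) (X l)| := Finset.abs_sum_le_sum_abs _ _
      _ ≤ ∑ _l : Fin n, 2 * L₀ * ε := Finset.sum_le_sum (fun l _ => hab i l)
      _ = (n:ℝ) * (2 * L₀ * ε) := by
          rw [Finset.sum_const, Finset.card_univ, Fintype.card_fin, nsmul_eq_mul]
      _ = 2 * (n:ℝ) * L₀ * ε := by ring
  constructor
  · -- stability bound
    intro i
    have hn : 0 < n := i.pos
    have hn' : (0:ℝ) < n := by exact_mod_cast hn
    set m := Real.sqrt ((n:ℝ)/K) with hmdef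
    have hm : 0 < m := Real.sqrt_pos.mpr (by positivity)
    have hmm : m * m = (n:ℝ)/K := Real.mul_self_sqrt (by positivity)
    have hmn : K * (m * m) = (n:ℝ) := by rw [hmm]; field_simp
    -- sqrt bounds
    have hsq_lb : ∀ (Y : Fin n → EuclideanSpace ℝ (Fin d)) (hY : ∀ i, ‖Y i‖ ≤ 2) j,
        m ≤ Real.sqrt (∑ l, k (Y j) (Y l)) :=
      fun Y hY j => Real.sqrt_le_sqrt (hsum_lb Y hY j)
    have hKm : Real.sqrt ((n:ℝ) * K) = K * m := by
      rw [show (n:ℝ) * K = (K * m) * (K * m) by rw [show (K*m)*(K*m) = K^2*(m*m) by ring, hmm]; field_simp]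
      exact Real.sqrt_mul_self (by positivity)
    have hsq_ub : ∀ (Y : Fin n → EuclideanSpace ℝ (Fin d)) (hY : ∀ i, ‖Y i‖ ≤ 2) j,
        Real.sqrt (∑ l, k (Y j) (Y l)) ≤ K * m := by
      intro Y hY j
      rw [← hKm]
      exact Real.sqrt_le_sqrt (hsum_ub Y hY j)
    have hsq_diff : ∀ j,
        |Real.sqrt (∑ l, k (Xh j) (Xh l)) - Real.sqrt (∑ l, k (X j) (X l))| ≤ (n:ℝ) * L₀ * ε / m := by
      intro j
      have h := sqrt_diff_bound hm (hmm ▸ hsum_lb Xh hXh2 j) (hmm ▸ hsum_lb X hX2 j)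
        (hsum_diff j)
      calc |Real.sqrt (∑ l, k (Xh j) (Xh l)) - Real.sqrt (∑ l, k (X j) (X l))|
          ≤ 2 * (n:ℝ) * L₀ * ε / (2 * m) := h
        _ = (n:ℝ) * L₀ * ε / m := by
            rw [show 2 * (n:ℝ) * L₀ * ε = 2 * ((n:ℝ) * L₀ * ε) by ring,
              mul_div_mul_left _ _ (two_ne_zero)]
    have hterm : ∀ j, |lapMat k Xh i j - lapMat k X i j| ≤ 4 * K ^ 4 * L₀ * ε / n := by
      intro j
      have hre : lapMat k Xh i j - lapMat k X i j =
          k (X i) (X j) / (Real.sqrt (∑ l, k (X i) (X l)) * Real.sqrt (∑ l, k (X j) (X l))) -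
          k (Xh i) (Xh j) / (Real.sqrt (∑ l, k (Xh i) (Xh l)) * Real.sqrt (∑ l, k (Xh j) (Xh l))) := by
        simp only [lapMat]; ring
      rw [hre]
      exact core_est K L₀ ε n m _ _ _ _ _ _ hK hL₀ hε0 hn' hm hmn
        (le_trans hKinv.le (hkXh i j).1) (hkXh i j).2 (hab i j)
        (hsq_lb Xh hXh2 i) (hsq_ub Xh hXh2 i) (hsq_lb Xh hXh2 j) (hsq_ub Xh hXh2 j)
        (hsq_lb X hX2 i) (hsq_ub X hX2 i) (hsq_lb X hX2 j) (hsq_ub X hX2 j)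
        (hsq_diff i) (hsq_diff j)
    calc ∑ j, |lapMat k Xh i j - lapMat k X i j| ≤ ∑ _j : Fin n, 4 * K ^ 4 * L₀ * ε / n :=
          Finset.sum_le_sum (fun j _ => hterm j)
      _ = (n:ℝ) * (4 * K ^ 4 * L₀ * ε / n) := by
          rw [Finset.sum_const, Finset.card_univ, Fintype.card_fin, nsmul_eq_mul]
      _ = 4 * K ^ 4 * L₀ * ε := by field_simp
  · -- norm bound
    intro i
    have hn : 0 < n := i.pos
    have hn' : (0:ℝ) < n := by exact_mod_cast hn
    have hterm : ∀ j, |lapMat k Xh i j| ≤ (if i = j then (1:ℝ) else 0) + K ^ 2 / n := by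
      intro j
      have hpq : (n:ℝ)/K ≤ Real.sqrt (∑ l, k (Xh i) (Xh l)) * Real.sqrt (∑ l, k (Xh j) (Xh l)) := by
        rw [show (n:ℝ)/K = Real.sqrt ((n:ℝ)/K) * Real.sqrt ((n:ℝ)/K) from
          (Real.mul_self_sqrt (by positivity)).symm]
        exact mul_le_mul (Real.sqrt_le_sqrt (hsum_lb Xh hXh2 i))
          (Real.sqrt_le_sqrt (hsum_lb Xh hXh2 j)) (Real.sqrt_nonneg _) (Real.sqrt_nonneg _)
      have hpq0 : (0:ℝ) < Real.sqrt (∑ l, k (Xh i) (Xh l)) * Real.sqrt (∑ l, k (Xh j) (Xh l)) :=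
        lt_of_lt_of_le (by positivity) hpq
      have ht0 : 0 ≤ k (Xh i) (Xh j) / (Real.sqrt (∑ l, k (Xh i) (Xh l)) * Real.sqrt (∑ l, k (Xh j) (Xh l))) :=
        div_nonneg (le_trans hKinv.le (hkXh i j).1) hpq0.le
      have ht : k (Xh i) (Xh j) / (Real.sqrt (∑ l, k (Xh i) (Xh l)) * Real.sqrt (∑ l, k (Xh j) (Xh l)))
          ≤ K ^ 2 / n := by
        calc k (Xh i) (Xh j) / (Real.sqrt (∑ l, k (Xh i) (Xh l)) * Real.sqrt (∑ l, k (Xh j) (Xh l)))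
            ≤ K / ((n:ℝ)/K) := div_le_div₀ hK0.le (hkXh i j).2 (by positivity) hpq
          _ = K ^ 2 / n := by field_simp
      have habs : |lapMat k Xh i j| ≤ |(if i = j then (1:ℝ) else 0)| +
          |k (Xh i) (Xh j) / (Real.sqrt (∑ l, k (Xh i) (Xh l)) * Real.sqrt (∑ l, k (Xh j) (Xh l)))| := by
        simp only [lapMat]; exact abs_sub _ _
      have hδ : |(if i = j then (1:ℝ) else 0)| = (if i = j then (1:ℝ) else 0) := by
        split_ifs <;> simp
      rw [hδ, abs_of_nonneg ht0] at habs
      exact le_trans habs (add_le_add le_rfl ht)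
    calc ∑ j, |lapMat k Xh i j| ≤ ∑ j, ((if i = j then (1:ℝ) else 0) + K ^ 2 / n) :=
          Finset.sum_le_sum (fun j _ => hterm j)
      _ = (∑ j, (if i = j then (1:ℝ) else 0)) + ∑ _j : Fin n, K ^ 2 / n := by
          rw [Finset.sum_add_distrib]
      _ = 1 + (n:ℝ) * (K ^ 2 / n) := by
          rw [Finset.sum_ite_eq Finset.univ i (fun _ => (1:ℝ)), if_pos (Finset.mem_univ i),
            Finset.sum_const, Finset.card_univ, Fintype.card_fin, nsmul_eq_mul]
      _ = 1 + K ^ 2 := by field_simp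
end

section
/- (Graphical Laplacian eigenvalue stability.) Let k : ℝ^d × ℝ^d → ℝ be symmetric and L₀-Lipschitz in each argument, and satisfy 1/K ≤ k(x,y) ≤ K whenever ‖x‖, ‖y‖ ≤ 2, for constants K ≥ 1, L₀ > 0. Let X_1,…,X_n ∈ ℝ^d with ‖X_i‖ ≤ 1 and X̂_1,…,X̂_n ∈ ℝ^d with ‖X̂_i − X_i‖ ≤ ε ≤ 1 for all i. Define A_{ij} = k(X_i, X_j), D = diag(∑_j A_{ij}), L = I − D^{−1/2}AD^{−1/2}, and analogously Â, D̂, L̂ from X̂_1,…,X̂_n. Let λ_1(L) ≥ … ≥ λ_n(L) and λ_1(L̂) ≥ … ≥ λ_n(L̂) be the eigenvalues of the symmetric matrices L and L̂. Then there is a constant C depending only on K and L₀ such that |λ_i(L̂) − λ_i(L)| ≤ C·ε for every i ∈ [n]. -/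
/-- The `k`-th largest value (1-indexed) among `f 0, …, f (m-1)`. -/
noncomputable def kthLargest {m : ℕ} (f : Fin m → ℝ) (k : ℕ) : ℝ :=
  ((Finset.univ.val.map f).sort (· ≥ ·)).getD (k - 1) 0

/-- The `k`-th largest eigenvalue (1-indexed) of a symmetric real matrix (junk value `0`
if the matrix is not symmetric). -/
noncomputable def symEig {n : ℕ} (S : Matrix (Fin n) (Fin n) ℝ) (k : ℕ) : ℝ :=
  if h : S.IsHermitian then kthLargest h.eigenvalues k else 0

lemma exists_antitone_rearrangement {m : ℕ} (f : Fin m → ℝ) :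
    ∃ σ : Equiv.Perm (Fin m), Antitone (f ∘ σ) ∧
      ∀ (k : ℕ) (hk : k < m), kthLargest f (k + 1) = f (σ ⟨k, hk⟩) := by
  classical
  set σ := Tuple.sort (fun i => -f i) with hσ
  have hmono : Monotone ((fun i => -f i) ∘ σ) := Tuple.monotone_sort _
  have hanti : Antitone (f ∘ σ) := by
    intro a b hab
    have := hmono hab
    simp only [Function.comp_apply] at this ⊢
    linarith
  have hsorted : List.Pairwise (· ≥ ·) (List.ofFn (f ∘ σ)) := by
    rw [List.pairwise_ofFn]
    intro a b hab
    exact hanti hab.le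
  have hperm : ((Finset.univ.val.map f).sort (· ≥ ·) : List ℝ).Perm (List.ofFn (f ∘ σ)) := by
    rw [← Multiset.coe_eq_coe, Multiset.sort_eq]
    rw [List.ofFn_eq_map]
    rw [show ((List.map (f ∘ σ) (List.finRange m) : List ℝ) : Multiset ℝ)
      = Multiset.map (f ∘ σ) (↑(List.finRange m) : Multiset (Fin m)) from rfl]
    rw [show (↑(List.finRange m) : Multiset (Fin m)) = (Finset.univ : Finset (Fin m)).val by
      rw [Fin.univ_def]]
    rw [show Multiset.map (f ∘ σ) Finset.univ.val = Multiset.map f (Multiset.map σ Finset.univ.val) by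
      rw [Multiset.map_map]]
    congr 1
    have : Multiset.map (⇑σ) Finset.univ.val = (Finset.univ.map σ.toEmbedding).val := rfl
    rw [this, Finset.map_univ_equiv]
  have heq : ((Finset.univ.val.map f).sort (· ≥ ·) : List ℝ) = List.ofFn (f ∘ σ) :=
    List.Perm.eq_of_pairwise (fun a b _ _ h1 h2 => le_antisymm h2 h1) (by apply Multiset.pairwise_sort) hsorted hperm
  refine ⟨σ, hanti, fun k hk => ?_⟩
  unfold kthLargest
  rw [heq]
  have hlen : k < (List.ofFn (f ∘ σ)).length := by simpa using hk
  simp only [Nat.add_sub_cancel]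
  rw [List.getD_eq_getElem?_getD, List.getElem?_eq_getElem hlen, Option.getD_some, List.getElem_ofFn]
  rfl

open Matrix in
lemma apply_eigvec {n : ℕ} {A : Matrix (Fin n) (Fin n) ℝ} (hA : A.IsHermitian) (j : Fin n) :
    Matrix.toEuclideanLin A (hA.eigenvectorBasis j) = hA.eigenvalues j • hA.eigenvectorBasis j := by
  apply (WithLp.equiv 2 (Fin n → ℝ)).injective
  simp only [Matrix.toEuclideanLin_apply, Equiv.apply_symm_apply]
  have := hA.mulVec_eigenvectorBasis j
  ext i
  simpa using congrFun this i

lemma norm_sq_eq_sum_inner {n : ℕ} (b : OrthonormalBasis (Fin n) ℝ (EuclideanSpace ℝ (Fin n)))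
    (x : EuclideanSpace ℝ (Fin n)) :
    ‖x‖ ^ 2 = ∑ j, (inner ℝ (b j) x : ℝ) ^ 2 := by
  have h1 : ‖x‖ = ‖b.repr x‖ := (b.repr.norm_map x).symm
  rw [h1, EuclideanSpace.norm_eq, Real.sq_sqrt (by positivity)]
  refine Finset.sum_congr rfl fun j _ => ?_
  rw [b.repr_apply_apply, Real.norm_eq_abs, sq_abs]

lemma quad_eq {n : ℕ} {A : Matrix (Fin n) (Fin n) ℝ} (hA : A.IsHermitian)
    (x : EuclideanSpace ℝ (Fin n)) :
    (inner ℝ x (Matrix.toEuclideanLin A x) : ℝ)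
      = ∑ j, hA.eigenvalues j * (inner ℝ (hA.eigenvectorBasis j) x : ℝ) ^ 2 := by
  set b := hA.eigenvectorBasis
  conv_lhs => rw [← b.sum_repr x]
  rw [map_sum, inner_sum]
  refine Finset.sum_congr rfl fun j _ => ?_
  rw [map_smul, apply_eigvec hA j, inner_smul_right, inner_smul_right]
  have : (inner ℝ (∑ i, b.repr x i • b i) (b j) : ℝ) = b.repr x j := by
    rw [b.sum_repr x, real_inner_comm, ← b.repr_apply_apply]
  rw [this, b.repr_apply_apply]
  ring

lemma inner_eq_zero_of_mem_span {n : ℕ} (b : OrthonormalBasis (Fin n) ℝ (EuclideanSpace ℝ (Fin n)))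
    (S : Finset (Fin n)) {x : EuclideanSpace ℝ (Fin n)}
    (hx : x ∈ Submodule.span ℝ (b '' (S : Set (Fin n)))) {j : Fin n} (hj : j ∉ S) :
    (inner ℝ (b j) x : ℝ) = 0 := by
  induction hx using Submodule.span_induction with
  | mem y hy =>
    obtain ⟨i, hi, rfl⟩ := hy
    exact b.orthonormal.2 (fun h => hj (h ▸ hi))
  | zero => simp
  | add y z _ _ hy hz => rw [inner_add_right, hy, hz, add_zero]
  | smul c y _ hy => rw [inner_smul_right, hy, mul_zero]

lemma finrank_span_orthonormal {n : ℕ} (b : OrthonormalBasis (Fin n) ℝ (EuclideanSpace ℝ (Fin n)))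
    (S : Finset (Fin n)) :
    Module.finrank ℝ (Submodule.span ℝ (b '' (S : Set (Fin n)))) = S.card := by
  have h1 : b '' (S : Set (Fin n)) = Set.range (⇑b ∘ (Subtype.val : {i // i ∈ S} → Fin n)) := by
    rw [Set.image_eq_range]; rfl
  rw [h1, finrank_span_eq_card ((b.orthonormal.comp _ Subtype.val_injective).linearIndependent)]
  simp [Fintype.card_coe]

lemma exists_ne_zero_mem_inf {n : ℕ} (V W : Submodule ℝ (EuclideanSpace ℝ (Fin n)))
    (h : n < Module.finrank ℝ V + Module.finrank ℝ W) :
    ∃ x, x ≠ 0 ∧ x ∈ V ∧ x ∈ W := by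
  have h2 := Submodule.finrank_sup_add_finrank_inf_eq V W
  have h3 : Module.finrank ℝ (V ⊔ W : Submodule ℝ (EuclideanSpace ℝ (Fin n))) ≤ n := by
    have := Submodule.finrank_le (V ⊔ W : Submodule ℝ (EuclideanSpace ℝ (Fin n)))
    simpa [finrank_euclideanSpace] using this
  have h4 : 0 < Module.finrank ℝ (V ⊓ W : Submodule ℝ (EuclideanSpace ℝ (Fin n))) := by omega
  have h5 : Nontrivial (V ⊓ W : Submodule ℝ (EuclideanSpace ℝ (Fin n))) :=
    Module.finrank_pos_iff.mp h4
  obtain ⟨⟨x, hx⟩, hx0⟩ := exists_ne (0 : (V ⊓ W : Submodule ℝ (EuclideanSpace ℝ (Fin n))))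
  exact ⟨x, fun h => hx0 (by simpa using h), (Submodule.mem_inf.mp hx).1, (Submodule.mem_inf.mp hx).2⟩

lemma card_filter_val_lt {n k : ℕ} (hk : k ≤ n) :
    (Finset.univ.filter (fun i : Fin n => i.val < k)).card = k := by
  have : Finset.univ.filter (fun i : Fin n => i.val < k)
      = Finset.map (Fin.castLEEmb hk) Finset.univ := by
    ext i
    simp only [Finset.mem_filter, Finset.mem_univ, true_and, Finset.mem_map, Fin.castLEEmb_apply]
    constructor
    · intro h; exact ⟨⟨i.val, h⟩, rfl⟩
    · rintro ⟨a, rfl⟩; exact a.2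
  rw [this, Finset.card_map, Finset.card_univ, Fintype.card_fin]

lemma card_filter_le_val {n k : ℕ} (hk : k ≤ n) :
    (Finset.univ.filter (fun i : Fin n => k ≤ i.val)).card = n - k := by
  have h := Finset.card_filter_add_card_filter_not
    (s := (Finset.univ : Finset (Fin n))) (p := fun i : Fin n => i.val < k)
  rw [card_filter_val_lt hk] at h
  have h2 : (Finset.univ.filter (fun i : Fin n => ¬ i.val < k))
      = Finset.univ.filter (fun i : Fin n => k ≤ i.val) := by
    ext i; simp [not_lt]
  rw [h2] at h
  simp only [Finset.card_univ, Fintype.card_fin] at h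
  omega

lemma weyl_ineq {n : ℕ} {A B : Matrix (Fin n) (Fin n) ℝ} (hA : A.IsHermitian) (hB : B.IsHermitian)
    (t : ℝ)
    (hE : ∀ x : EuclideanSpace ℝ (Fin n),
      (inner ℝ x (Matrix.toEuclideanLin (A - B) x) : ℝ) ≤ t * ‖x‖ ^ 2) :
    ∀ k : ℕ, 1 ≤ k → k ≤ n →
      kthLargest hA.eigenvalues k ≤ kthLargest hB.eigenvalues k + t := by
  intro k hk1 hkn
  obtain ⟨σ, hσa, hσ⟩ := exists_antitone_rearrangement hA.eigenvalues
  obtain ⟨τ, hτa, hτ⟩ := exists_antitone_rearrangement hB.eigenvalues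
  have hk' : k - 1 < n := by omega
  set lam := kthLargest hA.eigenvalues k with hlamdef
  set mu := kthLargest hB.eigenvalues k with hmudef
  have hlam : lam = hA.eigenvalues (σ ⟨k - 1, hk'⟩) := by
    have h := hσ (k - 1) hk'
    rw [show k - 1 + 1 = k from by omega] at h
    exact h
  have hmu : mu = hB.eigenvalues (τ ⟨k - 1, hk'⟩) := by
    have h := hτ (k - 1) hk'
    rw [show k - 1 + 1 = k from by omega] at h
    exact h
  set bA := hA.eigenvectorBasis
  set bB := hB.eigenvectorBasis
  set S := (Finset.univ.filter (fun i : Fin n => i.val < k)).image σ with hS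
  set T := (Finset.univ.filter (fun i : Fin n => k - 1 ≤ i.val)).image τ with hT
  have hcardS : S.card = k := by
    rw [hS, Finset.card_image_of_injective _ σ.injective, card_filter_val_lt hkn]
  have hcardT : T.card = n - (k - 1) := by
    rw [hT, Finset.card_image_of_injective _ τ.injective, card_filter_le_val (by omega)]
  set V := Submodule.span ℝ (bA '' (S : Set (Fin n)))
  set W := Submodule.span ℝ (bB '' (T : Set (Fin n)))
  obtain ⟨x, hx0, hxV, hxW⟩ : ∃ x, x ≠ 0 ∧ x ∈ V ∧ x ∈ W := by
    apply exists_ne_zero_mem_inf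
    rw [finrank_span_orthonormal, finrank_span_orthonormal, hcardS, hcardT]
    omega
  have hxn : (0 : ℝ) < ‖x‖ ^ 2 := pow_pos (norm_pos_iff.mpr hx0) 2
  -- Rayleigh lower bound on V
  have hAx : lam * ‖x‖ ^ 2 ≤ (inner ℝ x (Matrix.toEuclideanLin A x) : ℝ) := by
    rw [quad_eq hA, norm_sq_eq_sum_inner bA, Finset.mul_sum]
    apply Finset.sum_le_sum
    intro j _
    by_cases hj : j ∈ S
    · obtain ⟨i, hi, rfl⟩ := Finset.mem_image.mp hj
      have hiv : i.val < k := (Finset.mem_filter.mp hi).2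
      have : lam ≤ hA.eigenvalues (σ i) := by
        rw [hlam]
        exact hσa (show i ≤ ⟨k - 1, hk'⟩ by rw [Fin.le_def]; simp; omega)
      exact mul_le_mul_of_nonneg_right this (sq_nonneg _)
    · rw [inner_eq_zero_of_mem_span bA S hxV hj]
      simp
  -- Rayleigh upper bound on W
  have hBx : (inner ℝ x (Matrix.toEuclideanLin B x) : ℝ) ≤ mu * ‖x‖ ^ 2 := by
    rw [quad_eq hB, norm_sq_eq_sum_inner bB, Finset.mul_sum]
    apply Finset.sum_le_sum
    intro j _
    by_cases hj : j ∈ T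
    · obtain ⟨i, hi, rfl⟩ := Finset.mem_image.mp hj
      have hiv : k - 1 ≤ i.val := (Finset.mem_filter.mp hi).2
      have : hB.eigenvalues (τ i) ≤ mu := by
        rw [hmu]
        exact hτa (show (⟨k - 1, hk'⟩ : Fin n) ≤ i by rw [Fin.le_def]; simp; omega)
      exact mul_le_mul_of_nonneg_right this (sq_nonneg _)
    · rw [inner_eq_zero_of_mem_span bB T hxW hj]
      simp
  -- combine
  have hsplit : (inner ℝ x (Matrix.toEuclideanLin A x) : ℝ)
      = (inner ℝ x (Matrix.toEuclideanLin B x) : ℝ)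
        + (inner ℝ x (Matrix.toEuclideanLin (A - B) x) : ℝ) := by
    rw [map_sub]
    simp only [LinearMap.sub_apply, inner_sub_right]
    ring
  have hfinal : lam * ‖x‖ ^ 2 ≤ (mu + t) * ‖x‖ ^ 2 := by
    calc lam * ‖x‖ ^ 2 ≤ (inner ℝ x (Matrix.toEuclideanLin A x) : ℝ) := hAx
    _ = (inner ℝ x (Matrix.toEuclideanLin B x) : ℝ)
        + (inner ℝ x (Matrix.toEuclideanLin (A - B) x) : ℝ) := hsplit
    _ ≤ mu * ‖x‖ ^ 2 + t * ‖x‖ ^ 2 := add_le_add hBx (hE x)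
    _ = (mu + t) * ‖x‖ ^ 2 := by ring
  exact le_of_mul_le_mul_right (by linarith [hfinal]) hxn

lemma quad_bound {n : ℕ} (M : Matrix (Fin n) (Fin n) ℝ) (c : ℝ) (hc : 0 ≤ c)
    (hM : ∀ i j, |M i j| ≤ c) (x : EuclideanSpace ℝ (Fin n)) :
    (inner ℝ x (Matrix.toEuclideanLin M x) : ℝ) ≤ c * n * ‖x‖ ^ 2 := by
  have h1 : (inner ℝ x (Matrix.toEuclideanLin M x) : ℝ) = ∑ i, ∑ j, x i * (M i j * x j) := by
    simp [PiLp.inner_apply, Matrix.toEuclideanLin_apply, Matrix.mulVec, dotProduct,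
      Finset.mul_sum]
    refine Finset.sum_congr rfl fun i _ => ?_
    rw [Finset.sum_mul]
    exact Finset.sum_congr rfl fun j _ => by ring
  have hnorm : ‖x‖ ^ 2 = ∑ i, |x i| ^ 2 := by
    rw [EuclideanSpace.norm_eq, Real.sq_sqrt (by positivity)]
    simp [Real.norm_eq_abs]
  have h2 : ∑ i, ∑ j, x i * (M i j * x j) ≤ ∑ i : Fin n, ∑ j : Fin n, c * (|x i| * |x j|) := by
    apply Finset.sum_le_sum; intro i _
    apply Finset.sum_le_sum; intro j _
    calc x i * (M i j * x j) ≤ |x i * (M i j * x j)| := le_abs_self _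
    _ = |M i j| * (|x i| * |x j|) := by rw [abs_mul, abs_mul]; ring
    _ ≤ c * (|x i| * |x j|) := by
        apply mul_le_mul_of_nonneg_right (hM i j) (by positivity)
  have h3 : ∑ i : Fin n, ∑ j : Fin n, c * (|x i| * |x j|)
      = c * (∑ i, |x i|) ^ 2 := by
    rw [sq, Finset.sum_mul_sum]
    rw [Finset.mul_sum]
    congr 1; ext i
    rw [Finset.mul_sum]
  have h4 : (∑ i, |x i|) ^ 2 ≤ (n : ℝ) * ∑ i, |x i| ^ 2 := by
    simpa using sq_sum_le_card_mul_sum_sq (s := Finset.univ) (f := fun i => |x i|)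
  calc (inner ℝ x (Matrix.toEuclideanLin M x) : ℝ) ≤ c * (∑ i, |x i|) ^ 2 := by
        rw [h1]; exact le_of_le_of_eq h2 h3
  _ ≤ c * ((n : ℝ) * ∑ i, |x i| ^ 2) := mul_le_mul_of_nonneg_left h4 hc
  _ = c * n * ‖x‖ ^ 2 := by rw [hnorm]; ring

lemma entry_bound {n d : ℕ} (K L₀ : ℝ) (hK : 1 ≤ K) (hL₀ : 0 < L₀)
    (k : EuclideanSpace ℝ (Fin d) → EuclideanSpace ℝ (Fin d) → ℝ)
    (X Xh : Fin n → EuclideanSpace ℝ (Fin d)) (ε : ℝ)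
    (hlip1 : ∀ x x' y, |k x y - k x' y| ≤ L₀ * ‖x - x'‖)
    (hlip2 : ∀ x y y', |k x y - k x y'| ≤ L₀ * ‖y - y'‖)
    (hbd : ∀ x y, ‖x‖ ≤ 2 → ‖y‖ ≤ 2 → 1 / K ≤ k x y ∧ k x y ≤ K)
    (hX1 : ∀ i, ‖X i‖ ≤ 1) (hε0 : 0 ≤ ε) (hε1 : ε ≤ 1)
    (hXh : ∀ i, ‖Xh i - X i‖ ≤ ε) (hn : 0 < n) :
    ∀ i j, |lapMat k Xh i j - lapMat k X i j| ≤ 2 * L₀ * K ^ 3 * (1 + K) * ε / n := by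
  have hK0 : (0 : ℝ) < K := lt_of_lt_of_le one_pos hK
  have hN0 : (0 : ℝ) < n := by exact_mod_cast hn
  have hXb : ∀ i, ‖X i‖ ≤ 2 := fun i => le_trans (hX1 i) (by norm_num)
  have hXhb : ∀ i, ‖Xh i‖ ≤ 2 := by
    intro i
    calc ‖Xh i‖ = ‖(Xh i - X i) + X i‖ := by rw [sub_add_cancel]
    _ ≤ ‖Xh i - X i‖ + ‖X i‖ := norm_add_le _ _
    _ ≤ ε + 1 := add_le_add (hXh i) (hX1 i)
    _ ≤ 2 := by linarith
  have hkX : ∀ i l, 1 / K ≤ k (X i) (X l) ∧ k (X i) (X l) ≤ K :=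
    fun i l => hbd _ _ (hXb i) (hXb l)
  have hkXh : ∀ i l, 1 / K ≤ k (Xh i) (Xh l) ∧ k (Xh i) (Xh l) ≤ K :=
    fun i l => hbd _ _ (hXhb i) (hXhb l)
  set dX : Fin n → ℝ := fun i => ∑ l, k (X i) (X l) with hdX
  set dXh : Fin n → ℝ := fun i => ∑ l, k (Xh i) (Xh l) with hdXh
  have hd_lb : ∀ i, (n : ℝ) / K ≤ dX i := by
    intro i
    calc (n : ℝ) / K = ∑ _l : Fin n, 1 / K := by
          rw [Finset.sum_const, Finset.card_univ, Fintype.card_fin, nsmul_eq_mul]; ring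
    _ ≤ dX i := Finset.sum_le_sum fun l _ => (hkX i l).1
  have hd_ub : ∀ i, dX i ≤ (n : ℝ) * K := by
    intro i
    calc dX i ≤ ∑ _l : Fin n, K := Finset.sum_le_sum fun l _ => (hkX i l).2
    _ = (n : ℝ) * K := by rw [Finset.sum_const, Finset.card_univ, Fintype.card_fin, nsmul_eq_mul]
  have hdh_lb : ∀ i, (n : ℝ) / K ≤ dXh i := by
    intro i
    calc (n : ℝ) / K = ∑ _l : Fin n, 1 / K := by
          rw [Finset.sum_const, Finset.card_univ, Fintype.card_fin, nsmul_eq_mul]; ring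
    _ ≤ dXh i := Finset.sum_le_sum fun l _ => (hkXh i l).1
  have hdh_ub : ∀ i, dXh i ≤ (n : ℝ) * K := by
    intro i
    calc dXh i ≤ ∑ _l : Fin n, K := Finset.sum_le_sum fun l _ => (hkXh i l).2
    _ = (n : ℝ) * K := by rw [Finset.sum_const, Finset.card_univ, Fintype.card_fin, nsmul_eq_mul]
  set u : ℝ := Real.sqrt ((n : ℝ) / K) with hu
  set v : ℝ := Real.sqrt ((n : ℝ) * K) with hv
  have hu0 : 0 < u := Real.sqrt_pos.mpr (by positivity)
  have hv0 : 0 < v := Real.sqrt_pos.mpr (by positivity)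
  have hu2 : u ^ 2 = (n : ℝ) / K := Real.sq_sqrt (by positivity)
  have hv2 : v ^ 2 = (n : ℝ) * K := Real.sq_sqrt (by positivity)
  have huv : u * v = n := by
    rw [hu, hv, ← Real.sqrt_mul (by positivity)]
    rw [show (n : ℝ) / K * ((n : ℝ) * K) = (n : ℝ) ^ 2 by field_simp]
    exact Real.sqrt_sq hN0.le
  set s : Fin n → ℝ := fun i => Real.sqrt (dX i) with hs
  set sh : Fin n → ℝ := fun i => Real.sqrt (dXh i) with hsh
  have hs_lb : ∀ i, u ≤ s i := fun i => Real.sqrt_le_sqrt (hd_lb i)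
  have hs_ub : ∀ i, s i ≤ v := fun i => Real.sqrt_le_sqrt (hd_ub i)
  have hsh_lb : ∀ i, u ≤ sh i := fun i => Real.sqrt_le_sqrt (hdh_lb i)
  have hsh_ub : ∀ i, sh i ≤ v := fun i => Real.sqrt_le_sqrt (hdh_ub i)
  have hs2 : ∀ i, s i ^ 2 = dX i := fun i =>
    Real.sq_sqrt (le_trans (by positivity) (hd_lb i))
  have hsh2 : ∀ i, sh i ^ 2 = dXh i := fun i =>
    Real.sq_sqrt (le_trans (by positivity) (hdh_lb i))
  -- kernel value perturbation
  have haa : ∀ i j, |k (Xh i) (Xh j) - k (X i) (X j)| ≤ 2 * L₀ * ε := by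
    intro i j
    calc |k (Xh i) (Xh j) - k (X i) (X j)|
        ≤ |k (Xh i) (Xh j) - k (X i) (Xh j)| + |k (X i) (Xh j) - k (X i) (X j)| :=
          abs_sub_le _ _ _
    _ ≤ L₀ * ‖Xh i - X i‖ + L₀ * ‖Xh j - X j‖ := add_le_add (hlip1 _ _ _) (hlip2 _ _ _)
    _ ≤ L₀ * ε + L₀ * ε := add_le_add
        (mul_le_mul_of_nonneg_left (hXh i) hL₀.le)
        (mul_le_mul_of_nonneg_left (hXh j) hL₀.le)
    _ = 2 * L₀ * ε := by ring
  have hdd : ∀ i, |dXh i - dX i| ≤ 2 * L₀ * ε * n := by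
    intro i
    rw [hdXh, hdX]
    calc |∑ l, k (Xh i) (Xh l) - ∑ l, k (X i) (X l)|
        = |∑ l, (k (Xh i) (Xh l) - k (X i) (X l))| := by rw [Finset.sum_sub_distrib]
    _ ≤ ∑ l, |k (Xh i) (Xh l) - k (X i) (X l)| := Finset.abs_sum_le_sum_abs _ _
    _ ≤ ∑ _l : Fin n, 2 * L₀ * ε := Finset.sum_le_sum fun l _ => haa i l
    _ = 2 * L₀ * ε * n := by
        rw [Finset.sum_const, Finset.card_univ, Fintype.card_fin, nsmul_eq_mul]; ring
  -- sqrt perturbation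
  have hss : ∀ i, |sh i - s i| ≤ L₀ * ε * v := by
    intro i
    have h1 : |sh i - s i| * (sh i + s i) = |dXh i - dX i| := by
      rw [← abs_of_nonneg (show 0 ≤ sh i + s i by positivity), ← abs_mul]
      congr 1
      have := hs2 i; have := hsh2 i
      nlinarith [hs2 i, hsh2 i]
    have h2 : 2 * u ≤ sh i + s i := by linarith [hsh_lb i, hs_lb i]
    have h3 : |sh i - s i| * (2 * u) ≤ 2 * L₀ * ε * n := by
      calc |sh i - s i| * (2 * u) ≤ |sh i - s i| * (sh i + s i) :=
            mul_le_mul_of_nonneg_left h2 (abs_nonneg _)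
      _ = |dXh i - dX i| := h1
      _ ≤ 2 * L₀ * ε * n := hdd i
    have h4 : 2 * L₀ * ε * n = (L₀ * ε * v) * (2 * u) := by
      rw [← huv]; ring
    rw [h4] at h3
    exact le_of_mul_le_mul_right h3 (by positivity)
  -- product perturbation
  have hPQ : ∀ i j, |sh i * sh j - s i * s j| ≤ 2 * L₀ * ε * ((n : ℝ) * K) := by
    intro i j
    have : sh i * sh j - s i * s j = sh i * (sh j - s j) + s j * (sh i - s i) := by ring
    rw [this]
    calc |sh i * (sh j - s j) + s j * (sh i - s i)|
        ≤ |sh i * (sh j - s j)| + |s j * (sh i - s i)| := abs_add_le _ _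
    _ = sh i * |sh j - s j| + s j * |sh i - s i| := by
        rw [abs_mul, abs_mul, abs_of_nonneg (le_trans hu0.le (hsh_lb i)),
          abs_of_nonneg (le_trans hu0.le (hs_lb j))]
    _ ≤ v * (L₀ * ε * v) + v * (L₀ * ε * v) := add_le_add
        (mul_le_mul (hsh_ub i) (hss j) (abs_nonneg _) hv0.le)
        (mul_le_mul (hs_ub j) (hss i) (abs_nonneg _) hv0.le)
    _ = 2 * L₀ * ε * v ^ 2 := by ring
    _ = 2 * L₀ * ε * ((n : ℝ) * K) := by rw [hv2]
  -- main entry bound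
  intro i j
  have hP_lb : (n : ℝ) / K ≤ sh i * sh j := by
    calc (n : ℝ) / K = u * u := by rw [← hu2]; ring
    _ ≤ sh i * sh j := mul_le_mul (hsh_lb i) (hsh_lb j) hu0.le
        (le_trans hu0.le (hsh_lb i))
  have hQ_lb : (n : ℝ) / K ≤ s i * s j := by
    calc (n : ℝ) / K = u * u := by rw [← hu2]; ring
    _ ≤ s i * s j := mul_le_mul (hs_lb i) (hs_lb j) hu0.le (le_trans hu0.le (hs_lb i))
  set P := sh i * sh j
  set Q := s i * s j
  set a := k (X i) (X j)
  set ah := k (Xh i) (Xh j)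
  have hP0 : 0 < P := lt_of_lt_of_le (by positivity) hP_lb
  have hQ0 : 0 < Q := lt_of_lt_of_le (by positivity) hQ_lb
  have hiden : lapMat k Xh i j - lapMat k X i j = -(ah / P - a / Q) := by
    simp only [lapMat]
    ring
  rw [hiden, abs_neg]
  have hiden2 : ah / P - a / Q = ((ah - a) * Q + a * (Q - P)) / (P * Q) := by
    field_simp
    ring
  rw [hiden2, abs_div]
  rw [abs_of_pos (by positivity : (0:ℝ) < P * Q)]
  have hnum : |(ah - a) * Q + a * (Q - P)| ≤ 2 * L₀ * ε * ((n:ℝ) * K) + K * (2 * L₀ * ε * ((n:ℝ) * K)) := by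
    calc |(ah - a) * Q + a * (Q - P)| ≤ |(ah - a) * Q| + |a * (Q - P)| := abs_add_le _ _
    _ = |ah - a| * Q + |a| * |Q - P| := by
        rw [abs_mul (ah - a) Q, abs_mul a (Q - P), abs_of_pos hQ0]
    _ ≤ (2 * L₀ * ε) * ((n:ℝ) * K) + K * (2 * L₀ * ε * ((n:ℝ) * K)) := by
        have h5 : Q ≤ (n:ℝ) * K := by
          calc Q ≤ v * v := mul_le_mul (hs_ub i) (hs_ub j) (le_trans hu0.le (hs_lb j)) hv0.le
          _ = (n:ℝ) * K := by rw [← hv2]; ring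
        have h6 : |a| ≤ K := by
          rw [abs_of_nonneg (le_trans (by positivity) (hkX i j).1)]
          exact (hkX i j).2
        have h7 : |Q - P| ≤ 2 * L₀ * ε * ((n:ℝ) * K) := by
          rw [abs_sub_comm]; exact hPQ i j
        exact add_le_add
          (mul_le_mul (haa i j) h5 (by positivity) (by positivity))
          (mul_le_mul h6 h7 (abs_nonneg _) hK0.le)
  have hden : (n:ℝ)/K * ((n:ℝ)/K) ≤ P * Q :=
    mul_le_mul hP_lb hQ_lb (by positivity) hP0.le
  calc |(ah - a) * Q + a * (Q - P)| / (P * Q)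
      ≤ (2 * L₀ * ε * ((n:ℝ) * K) + K * (2 * L₀ * ε * ((n:ℝ) * K))) / ((n:ℝ)/K * ((n:ℝ)/K)) :=
        div_le_div₀ (by positivity) hnum (by positivity) hden
  _ = 2 * L₀ * K ^ 3 * (1 + K) * ε / n := by
      field_simp

lemma lapMat_isHermitian {n d : ℕ} (k : EuclideanSpace ℝ (Fin d) → EuclideanSpace ℝ (Fin d) → ℝ)
    (hsym : ∀ x y, k x y = k y x) (X : Fin n → EuclideanSpace ℝ (Fin d)) :
    (lapMat k X).IsHermitian := by
  rw [Matrix.IsHermitian]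
  ext i j
  simp only [Matrix.conjTranspose_apply, lapMat, star_trivial]
  rw [hsym (X j) (X i), mul_comm (Real.sqrt (∑ l, k (X j) (X l)))]
  congr 1
  simp [eq_comm]

/-- Proposition (graphical Laplacian eigenvalue stability).  For a symmetric kernel `k`,
`L₀`-Lipschitz in each argument with `1/K ≤ k ≤ K` on the ball of radius 2, data with
`‖X_i‖ ≤ 1` and denoised data with `‖X̂_i − X_i‖ ≤ ε ≤ 1`, there is a constant `C`
depending only on `K, L₀` such that `|λ_i(L̂) − λ_i(L)| ≤ Cε` for every `i ∈ [n]`,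
the eigenvalues being listed in nonincreasing order. -/
theorem laplacian_eigenvalue_stability (K L₀ : ℝ) (hK : 1 ≤ K) (hL₀ : 0 < L₀) :
    ∃ C : ℝ, 0 < C ∧
      ∀ (n d : ℕ) (k : EuclideanSpace ℝ (Fin d) → EuclideanSpace ℝ (Fin d) → ℝ)
        (X Xh : Fin n → EuclideanSpace ℝ (Fin d)) (ε : ℝ),
        (∀ x y, k x y = k y x) →
        (∀ x x' y, |k x y - k x' y| ≤ L₀ * ‖x - x'‖) →
        (∀ x y y', |k x y - k x y'| ≤ L₀ * ‖y - y'‖) →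
        (∀ x y, ‖x‖ ≤ 2 → ‖y‖ ≤ 2 → 1 / K ≤ k x y ∧ k x y ≤ K) →
        (∀ i, ‖X i‖ ≤ 1) →
        0 ≤ ε → ε ≤ 1 →
        (∀ i, ‖Xh i - X i‖ ≤ ε) →
        ∀ i : ℕ, 1 ≤ i → i ≤ n →
          |symEig (lapMat k Xh) i - symEig (lapMat k X) i| ≤ C * ε := by
  refine ⟨2 * L₀ * K ^ 3 * (1 + K), by positivity, ?_⟩
  intro n d k X Xh ε hsym hlip1 hlip2 hbd hX1 hε0 hε1 hXh i hi1 hin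
  set C := 2 * L₀ * K ^ 3 * (1 + K) with hC
  have hC0 : 0 < C := by rw [hC]; positivity
  have hn : 0 < n := by omega
  have hN0 : (0 : ℝ) < n := by exact_mod_cast hn
  have hA : (lapMat k Xh).IsHermitian := lapMat_isHermitian k hsym Xh
  have hB : (lapMat k X).IsHermitian := lapMat_isHermitian k hsym X
  have hent := entry_bound K L₀ hK hL₀ k X Xh ε hlip1 hlip2 hbd hX1 hε0 hε1 hXh hn
  have hquad1 : ∀ x : EuclideanSpace ℝ (Fin n),
      (inner ℝ x (Matrix.toEuclideanLin (lapMat k Xh - lapMat k X) x) : ℝ) ≤ (C * ε) * ‖x‖ ^ 2 := by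
    intro x
    have h := quad_bound (lapMat k Xh - lapMat k X) (C * ε / n) (by positivity)
      (fun i j => by rw [Matrix.sub_apply]; exact hent i j) x
    calc (inner ℝ x (Matrix.toEuclideanLin (lapMat k Xh - lapMat k X) x) : ℝ)
        ≤ (C * ε / n) * n * ‖x‖ ^ 2 := h
    _ = (C * ε) * ‖x‖ ^ 2 := by field_simp
  have hquad2 : ∀ x : EuclideanSpace ℝ (Fin n),
      (inner ℝ x (Matrix.toEuclideanLin (lapMat k X - lapMat k Xh) x) : ℝ) ≤ (C * ε) * ‖x‖ ^ 2 := by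
    intro x
    have h := quad_bound (lapMat k X - lapMat k Xh) (C * ε / n) (by positivity)
      (fun i j => by rw [Matrix.sub_apply, abs_sub_comm]; exact hent i j) x
    calc (inner ℝ x (Matrix.toEuclideanLin (lapMat k X - lapMat k Xh) x) : ℝ)
        ≤ (C * ε / n) * n * ‖x‖ ^ 2 := h
    _ = (C * ε) * ‖x‖ ^ 2 := by field_simp
  have h1 := weyl_ineq hA hB (C * ε) hquad1 i hi1 hin
  have h2 := weyl_ineq hB hA (C * ε) hquad2 i hi1 hin
  simp only [symEig, dif_pos hA, dif_pos hB]
  rw [abs_sub_le_iff]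
  constructor <;> linarith
end

section
/- (ERM with denoised data: parameter consistency.) Let F : ℝ^d × Y × ℝ^p → ℝ satisfy: there are constants L, Δ > 0 such that |F(z, y, θ) − F(x, y, θ)| ≤ L‖z − x‖ for all y ∈ Y, θ ∈ ℝ^p, and all x, z with ‖z − x‖ ≤ Δ. Let (X_i, y_i), X̂_i with max_i ‖X̂_i − X_i‖ ≤ ε ≤ Δ, and set f(θ) = (1/n)∑_i F(X_i, y_i, θ), f̂(θ) = (1/n)∑_i F(X̂_i, y_i, θ). Suppose f is twice continuously differentiable with a unique global minimizer θ*, and there are constants γ, δ, λ_f > 0 with: f(θ) − f(θ*) ≥ γ whenever ‖θ − θ*‖ ≥ δ, and ∇²f(θ) ⪰ λ_f·I whenever ‖θ − θ*‖ ≤ δ. If 2Lε < γ and θ̂* is a global minimizer of f̂, then ‖θ̂* − θ*‖² ≤ 4Lε/λ_f. -/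
/-- Proposition (ERM with denoised data: parameter consistency).  Under the Lipschitz
condition on the loss, if the clean empirical risk `f` is twice continuously
differentiable with unique global minimizer `θ*`, `f(θ) − f(θ*) ≥ γ` for `‖θ − θ*‖ ≥ δ`,
`∇²f(θ) ⪰ λ_f I` for `‖θ − θ*‖ ≤ δ`, `2Lε < γ`, and `θ̂*` globally minimizes the denoised
empirical risk `f̂`, then `‖θ̂* − θ*‖² ≤ 4Lε/λ_f`. -/
theorem erm_denoised_parameter_consistency (d p n : ℕ) (Y : Type)
    (F : EuclideanSpace ℝ (Fin d) → Y → EuclideanSpace ℝ (Fin p) → ℝ)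
    (L Δ ε γ δ lamf : ℝ) (hL : 0 < L) (hΔ : 0 < Δ)
    (hγ : 0 < γ) (hδ : 0 < δ) (hlamf : 0 < lamf)
    (hLip : ∀ (x z : EuclideanSpace ℝ (Fin d)) (y : Y) (θ : EuclideanSpace ℝ (Fin p)),
      ‖z - x‖ ≤ Δ → |F z y θ - F x y θ| ≤ L * ‖z - x‖)
    (X Xh : Fin n → EuclideanSpace ℝ (Fin d)) (y : Fin n → Y)
    (hε0 : 0 ≤ ε) (hεΔ : ε ≤ Δ) (hXh : ∀ i, ‖Xh i - X i‖ ≤ ε)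
    (f fh : EuclideanSpace ℝ (Fin p) → ℝ)
    (hf : ∀ θ, f θ = (1 / n : ℝ) * ∑ i, F (X i) (y i) θ)
    (hfh : ∀ θ, fh θ = (1 / n : ℝ) * ∑ i, F (Xh i) (y i) θ)
    (hsmooth : ContDiff ℝ 2 f)
    (θs : EuclideanSpace ℝ (Fin p))
    (hmin : ∀ θ, f θs ≤ f θ)
    (huniq : ∀ θ, f θ = f θs → θ = θs)
    (hgrow : ∀ θ, δ ≤ ‖θ - θs‖ → γ ≤ f θ - f θs)
    (hhess : ∀ θ, ‖θ - θs‖ ≤ δ →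
      ∀ w : EuclideanSpace ℝ (Fin p),
        lamf * ‖w‖ ^ 2 ≤ (iteratedFDeriv ℝ 2 f θ) ![w, w])
    (hcond : 2 * L * ε < γ)
    (θh : EuclideanSpace ℝ (Fin p)) (hminh : ∀ θ, fh θh ≤ fh θ) :
    ‖θh - θs‖ ^ 2 ≤ 4 * L * ε / lamf := by
  have hLε : 0 ≤ L * ε := mul_nonneg hL.le hε0
  -- Step 1: |fh θ - f θ| ≤ L ε for every θ
  have hclose : ∀ θ, |fh θ - f θ| ≤ L * ε := by
    intro θ
    rw [hf, hfh, ← mul_sub, ← Finset.sum_sub_distrib, abs_mul]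
    have h1 : |∑ i : Fin n, (F (Xh i) (y i) θ - F (X i) (y i) θ)| ≤ ∑ i : Fin n, (L * ε) := by
      refine (Finset.abs_sum_le_sum_abs _ _).trans (Finset.sum_le_sum fun i _ => ?_)
      exact (hLip (X i) (Xh i) (y i) θ ((hXh i).trans hεΔ)).trans
        (mul_le_mul_of_nonneg_left (hXh i) hL.le)
    have h2 : |(1 / n : ℝ)| * |∑ i : Fin n, (F (Xh i) (y i) θ - F (X i) (y i) θ)| ≤
        (1 / n : ℝ) * (n * (L * ε)) := by
      rw [abs_of_nonneg (by positivity)]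
      refine mul_le_mul_of_nonneg_left ?_ (by positivity)
      simpa using h1
    refine h2.trans ?_
    rcases Nat.eq_zero_or_pos n with h | h
    · simpa [h] using hLε
    · have : (0:ℝ) < n := by exact_mod_cast h
      rw [one_div, inv_mul_le_iff₀ this]
  -- Step 2: f θh - f θs ≤ 2 L ε
  have hkey : f θh - f θs ≤ 2 * L * ε := by
    have h1 := hclose θh
    have h2 := hclose θs
    have h3 := hminh θs
    rw [abs_le] at h1 h2
    linarith [h1.1, h1.2, h2.1, h2.2]
  -- Step 3: ‖θh - θs‖ ≤ δ
  have hball : ‖θh - θs‖ ≤ δ := by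
    by_contra h
    push_neg at h
    have := hgrow θh h.le
    linarith
  -- Step 4: strong convexity along the segment
  set v := θh - θs with hv
  set K := lamf * ‖v‖ ^ 2 with hK
  set c : ℝ → EuclideanSpace ℝ (Fin p) := fun t => θs + t • v with hc
  have hcs : ∀ t ∈ Set.Icc (0:ℝ) 1, ‖c t - θs‖ ≤ δ := by
    intro t ht
    have : c t - θs = t • v := by simp [hc]
    rw [this, norm_smul]
    calc ‖t‖ * ‖v‖ ≤ 1 * ‖v‖ := by
          refine mul_le_mul_of_nonneg_right ?_ (norm_nonneg _)
          rw [Real.norm_eq_abs, abs_le]; exact ⟨by linarith [ht.1], ht.2⟩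
      _ = ‖v‖ := one_mul _
      _ ≤ δ := hball
  have hdf : Differentiable ℝ f := hsmooth.differentiable (by norm_num)
  have hdf2 : Differentiable ℝ (fderiv ℝ f) :=
    (hsmooth.fderiv_right (m := 1) (by norm_num)).differentiable (by norm_num)
  have hcder : ∀ t : ℝ, HasDerivAt c v t := by
    intro t
    have h := ((hasDerivAt_id t).smul_const v).const_add θs
    rw [one_smul] at h
    exact h
  have hgder : ∀ t : ℝ, HasDerivAt (fun t => f (c t)) (fderiv ℝ f (c t) v) t := by
    intro t
    exact (hdf (c t)).hasFDerivAt.comp_hasDerivAt t (hcder t)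
  have hg1der : ∀ t : ℝ,
      HasDerivAt (fun t => fderiv ℝ f (c t) v) (fderiv ℝ (fderiv ℝ f) (c t) v v) t := by
    intro t
    have hA : HasDerivAt (fun t => fderiv ℝ f (c t)) (fderiv ℝ (fderiv ℝ f) (c t) v) t :=
      (hdf2 (c t)).hasFDerivAt.comp_hasDerivAt t (hcder t)
    simpa using hA.clm_apply (hasDerivAt_const t v)
  -- Hessian bound along segment
  have hhess' : ∀ t ∈ Set.Icc (0:ℝ) 1, K ≤ fderiv ℝ (fderiv ℝ f) (c t) v v := by
    intro t ht
    have := hhess (c t) (hcs t ht) v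
    rwa [iteratedFDeriv_two_apply] at this
    -- note: m 0 = v, m 1 = v handled definitionally
  -- gradient vanishes at θs
  have hgrad0 : fderiv ℝ f θs = 0 := by
    have hloc : IsLocalMin f θs := Filter.Eventually.of_forall hmin
    exact hloc.fderiv_eq_zero
  have hc0 : c 0 = θs := by simp [hc]
  have hc1 : c 1 = θh := by simp [hc, hv]
  -- k t = g1 t - K t is monotone on [0,1]
  have hkmono : MonotoneOn (fun t => fderiv ℝ f (c t) v - K * t) (Set.Icc 0 1) := by
    apply monotoneOn_of_deriv_nonneg (convex_Icc 0 1)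
    · exact (Differentiable.continuous (fun t =>
        (((hg1der t).sub ((hasDerivAt_id t).const_mul K)).differentiableAt))).continuousOn
    · intro t _
      exact (((hg1der t).sub ((hasDerivAt_id t).const_mul K)).differentiableAt).differentiableWithinAt
    · intro t ht
      have ht' : t ∈ Set.Icc (0:ℝ) 1 := interior_subset ht
      have hd : HasDerivAt (fun t => fderiv ℝ f (c t) v - K * t)
          (fderiv ℝ (fderiv ℝ f) (c t) v v - K) t := by
        have h := (hg1der t).sub ((hasDerivAt_id t).const_mul K)
        rw [mul_one] at h
        exact h
      rw [hd.deriv]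
      linarith [hhess' t ht']
  have hg1lb : ∀ t ∈ Set.Icc (0:ℝ) 1, K * t ≤ fderiv ℝ f (c t) v := by
    intro t ht
    have h0 : (0:ℝ) ∈ Set.Icc (0:ℝ) 1 := by constructor <;> norm_num
    have := hkmono h0 ht ht.1
    simp only [mul_zero, hc0, hgrad0] at this
    simpa using this
  -- h t = f (c t) - K t²/2 is monotone on [0,1]
  have hhmono : MonotoneOn (fun t => f (c t) - K * (t ^ 2 / 2)) (Set.Icc 0 1) := by
    apply monotoneOn_of_deriv_nonneg (convex_Icc 0 1)
    · have hdiff : Differentiable ℝ (fun t => f (c t) - K * (t ^ 2 / 2)) := fun t => by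
        have h2 : HasDerivAt (fun t : ℝ => K * (t ^ 2 / 2)) (K * t) t := by
          have := ((hasDerivAt_pow 2 t).div_const 2).const_mul K
          simpa using this
        exact ((hgder t).sub h2).differentiableAt
      exact hdiff.continuous.continuousOn
    · intro t _
      have hd : HasDerivAt (fun t => f (c t) - K * (t ^ 2 / 2))
          (fderiv ℝ f (c t) v - K * t) t := by
        have h2 : HasDerivAt (fun t : ℝ => K * (t ^ 2 / 2)) (K * t) t := by
          have := ((hasDerivAt_pow 2 t).div_const 2).const_mul K
          simpa using this
        exact (hgder t).sub h2
      exact hd.differentiableAt.differentiableWithinAt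
    · intro t ht
      have ht' : t ∈ Set.Icc (0:ℝ) 1 := interior_subset ht
      have hd : HasDerivAt (fun t => f (c t) - K * (t ^ 2 / 2))
          (fderiv ℝ f (c t) v - K * t) t := by
        have h2 : HasDerivAt (fun t : ℝ => K * (t ^ 2 / 2)) (K * t) t := by
          have := ((hasDerivAt_pow 2 t).div_const 2).const_mul K
          simpa using this
        exact (hgder t).sub h2
      rw [hd.deriv]
      linarith [hg1lb t ht']
  have h0 : (0:ℝ) ∈ Set.Icc (0:ℝ) 1 := by constructor <;> norm_num
  have h1 : (1:ℝ) ∈ Set.Icc (0:ℝ) 1 := by constructor <;> norm_num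
  have hfin := hhmono h0 h1 (by norm_num)
  simp only [hc0, hc1] at hfin
  -- hfin : f θs - K * (0/2) ≤ f θh - K * (1/2)
  have hKle : K / 2 ≤ 2 * L * ε := by
    have : f θs - K * (0 ^ 2 / 2) ≤ f θh - K * (1 ^ 2 / 2) := hfin
    norm_num at this
    linarith
  rw [hK] at hKle
  rw [le_div_iff₀ hlamf]
  nlinarith
end

section
/- (Leave-one-out block identity.) Let Z ∈ ℝ^{n×d} have first row z₁ᵀ (z₁ ∈ ℝ^d) and remaining rows forming Z̃ ∈ ℝ^{(n−1)×d}, so that ZᵀZ = Z̃ᵀZ̃ + z₁z₁ᵀ. Let Ṽ = [Ṽᵣ, Ṽ_⊥] ∈ ℝ^{d×d} be an orthogonal matrix with Ṽᵣ ∈ ℝ^{d×r}, such that Z̃ᵀZ̃ = Ṽ diag(Λ̃ᵣ², Λ̃_⊥²) Ṽᵀ where Λ̃ᵣ² ∈ ℝ^{r×r} and Λ̃_⊥² ∈ ℝ^{(d−r)×(d−r)} are diagonal. Suppose v̂ ∈ ℝ^d satisfies ZᵀZ v̂ = λ̂² v̂ for some λ̂ ∈ ℝ. Set y = Ṽᵣᵀ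 v̂, y_⊥ = Ṽ_⊥ᵀ v̂, a = Ṽᵣᵀ z₁ and b = Ṽ_⊥ᵀ z₁. If the matrix λ̂²·I − Λ̃_⊥² − bbᵀ is invertible, then y_⊥ = (λ̂²·I − Λ̃_⊥² − bbᵀ)^{−1} · b · (aᵀy). -/
open Matrix

lemma mul_vecMulVec_left {n p : Type*} [Fintype p] [Fintype n] (A : Matrix n p ℝ)
    (u v : p → ℝ) : A * vecMulVec u v = vecMulVec (A *ᵥ u) v := by
  ext i j
  simp [Matrix.mul_apply, vecMulVec_apply, mulVec, dotProduct, Finset.sum_mul, mul_assoc]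

lemma vecMulVec_mulVec' {n p : Type*} [Fintype p] (u : n → ℝ) (v : p → ℝ) (x : p → ℝ) :
    vecMulVec u v *ᵥ x = (v ⬝ᵥ x) • u := by
  ext i
  simp [mulVec, vecMulVec_apply, dotProduct, Finset.mul_sum, mul_comm, mul_left_comm]

/-- Lemma (leave-one-out block identity).  Let `Z ∈ ℝ^{(m+1)×d}` have first row `z₁` and
remaining rows `Z̃`, let `Ṽ = [Ṽᵣ, Ṽ_⊥]` be orthogonal with
`Z̃ᵀZ̃ = Ṽᵣ Λ̃ᵣ² Ṽᵣᵀ + Ṽ_⊥ Λ̃_⊥² Ṽ_⊥ᵀ`, and let `ZᵀZ v̂ = λ̂² v̂`.  With `y = Ṽᵣᵀ v̂`,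
`y_⊥ = Ṽ_⊥ᵀ v̂`, `a = Ṽᵣᵀ z₁`, `b = Ṽ_⊥ᵀ z₁`, if `λ̂² I − Λ̃_⊥² − bbᵀ` is invertible then
`y_⊥ = (λ̂² I − Λ̃_⊥² − bbᵀ)⁻¹ b (aᵀ y)`. -/
theorem leave_one_out_block_identity (m d r : ℕ)
    (Z : Matrix (Fin (m + 1)) (Fin d) ℝ)
    (z₁ : Fin d → ℝ) (hz₁ : ∀ j, z₁ j = Z 0 j)
    (Zt : Matrix (Fin m) (Fin d) ℝ) (hZt : ∀ i j, Zt i j = Z i.succ j)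
    (Vr : Matrix (Fin d) (Fin r) ℝ) (Vp : Matrix (Fin d) (Fin (d - r)) ℝ)
    (lamr : Fin r → ℝ) (lamp : Fin (d - r) → ℝ)
    (hVr : Vrᵀ * Vr = 1) (hVp : Vpᵀ * Vp = 1) (horth : Vrᵀ * Vp = 0)
    (hcomp : Vr * Vrᵀ + Vp * Vpᵀ = 1)
    (hdecomp : Ztᵀ * Zt =
      Vr * Matrix.diagonal lamr * Vrᵀ + Vp * Matrix.diagonal lamp * Vpᵀ)
    (vh : Fin d → ℝ) (lamh : ℝ)
    (heig : (Zᵀ * Z) *ᵥ vh = lamh ^ 2 • vh)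
    (hinv : IsUnit (lamh ^ 2 • (1 : Matrix (Fin (d - r)) (Fin (d - r)) ℝ)
        - Matrix.diagonal lamp - vecMulVec (Vpᵀ *ᵥ z₁) (Vpᵀ *ᵥ z₁)).det) :
    Vpᵀ *ᵥ vh = ((Vrᵀ *ᵥ z₁) ⬝ᵥ (Vrᵀ *ᵥ vh)) •
      ((lamh ^ 2 • (1 : Matrix (Fin (d - r)) (Fin (d - r)) ℝ)
          - Matrix.diagonal lamp - vecMulVec (Vpᵀ *ᵥ z₁) (Vpᵀ *ᵥ z₁))⁻¹
        *ᵥ (Vpᵀ *ᵥ z₁)) := by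
  set a := Vrᵀ *ᵥ z₁ with ha
  set b := Vpᵀ *ᵥ z₁ with hb
  set y := Vrᵀ *ᵥ vh with hy
  set yp := Vpᵀ *ᵥ vh with hypdef
  set M := lamh ^ 2 • (1 : Matrix (Fin (d - r)) (Fin (d - r)) ℝ)
      - Matrix.diagonal lamp - vecMulVec b b with hM
  -- row decomposition
  have hZZ : Zᵀ * Z = Ztᵀ * Zt + vecMulVec z₁ z₁ := by
    ext i j
    simp only [Matrix.mul_apply, Matrix.add_apply, vecMulVec_apply, Matrix.transpose_apply,
      hz₁, hZt, Fin.sum_univ_succ]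
    ring
  have hVpVr : Vpᵀ * Vr = 0 := by
    have := congrArg Matrix.transpose horth
    simpa using this
  -- project the eigen-equation
  have hproj : Vpᵀ * (Ztᵀ * Zt) = Matrix.diagonal lamp * Vpᵀ := by
    rw [hdecomp, Matrix.mul_add]
    rw [show Vpᵀ * (Vr * Matrix.diagonal lamr * Vrᵀ) = (Vpᵀ * Vr) * Matrix.diagonal lamr * Vrᵀ by
      simp [Matrix.mul_assoc],
      show Vpᵀ * (Vp * Matrix.diagonal lamp * Vpᵀ) = (Vpᵀ * Vp) * Matrix.diagonal lamp * Vpᵀ by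
      simp [Matrix.mul_assoc], hVpVr, hVp]
    simp
  have hdot : z₁ ⬝ᵥ vh = a ⬝ᵥ y + b ⬝ᵥ yp := by
    have h1 : vh = (Vr * Vrᵀ + Vp * Vpᵀ) *ᵥ vh := by rw [hcomp, Matrix.one_mulVec]
    calc z₁ ⬝ᵥ vh = z₁ ⬝ᵥ ((Vr * Vrᵀ + Vp * Vpᵀ) *ᵥ vh) := by rw [← h1]
    _ = a ⬝ᵥ y + b ⬝ᵥ yp := by
        simp only [Matrix.add_mulVec, dotProduct_add, ← Matrix.mulVec_mulVec,
          dotProduct_mulVec, Matrix.mulVec_transpose, ha, hb, hy, hypdef]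
  have hmain : lamh ^ 2 • yp = Matrix.diagonal lamp *ᵥ yp + (a ⬝ᵥ y + b ⬝ᵥ yp) • b := by
    have h2 : Vpᵀ *ᵥ ((Zᵀ * Z) *ᵥ vh) = lamh ^ 2 • yp := by
      rw [heig, Matrix.mulVec_smul]
    rw [Matrix.mulVec_mulVec, hZZ, Matrix.mul_add, hproj, mul_vecMulVec_left,
      Matrix.add_mulVec, ← Matrix.mulVec_mulVec, vecMulVec_mulVec', hdot] at h2
    exact h2.symm
  have hMyp : M *ᵥ yp = (a ⬝ᵥ y) • b := by
    rw [hM, Matrix.sub_mulVec, Matrix.sub_mulVec, Matrix.smul_mulVec,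
      Matrix.one_mulVec, vecMulVec_mulVec', hmain, add_smul]
    abel
  have hfin : yp = M⁻¹ *ᵥ (M *ᵥ yp) := by
    rw [Matrix.mulVec_mulVec, Matrix.nonsing_inv_mul M hinv, Matrix.one_mulVec]
  rw [hfin, hMyp, Matrix.mulVec_smul]
end
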